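/- arXiv:2108.11432 — 5 statements merged into one kernel-verified Lean document; each statement's English description precedes it below -/
import Mathlib

section
/- The bilinear form xi121 is a Hochschild 2-cocycle on B, i.e. eps(a)*xi121(b,c) + xi121(a,b*c) = xi121(a*b,c) + xi121(a,b)*eps(c) for all a, b, c in B. -/
set_option maxHeartbeats 1000000


/-!
Common framework: convolution algebras, Hopf 2-cocycles, the Nichols algebra `B` of Cartan
type `A₂` with `q = -1`, its bosonization `A = B # H`, bilinear forms on `B` and their
extensions to `A ⊗ A`, following García–Sánchez, "Hopf cocycles associated to pointed and
copointed deformations over S₃" (arXiv:2108.11432).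
-/

open scoped TensorProduct
open TensorProduct

noncomputable section

namespace PaperA2

section Defs

variable (k : Type*) [Field k]

section Conv

variable {C : Type*} [AddCommMonoid C] [Module k C] [CoalgebraStruct k C]

/-- Convolution product on linear functionals on a coalgebra:
`(f * g)(c) = ∑ f(c₁) g(c₂)`. -/
def conv (f g : C →ₗ[k] k) : C →ₗ[k] k :=
  LinearMap.mul' k k ∘ₗ TensorProduct.map f g ∘ₗ CoalgebraStruct.comul

/-- The unit of the convolution algebra: the counit. -/
def convOne : C →ₗ[k] k := CoalgebraStruct.counit

/-- Convolution invertibility. -/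
def IsConvUnit (f : C →ₗ[k] k) : Prop :=
  ∃ g, conv k f g = convOne k ∧ conv k g f = convOne k

/-- Convolution powers `f^{*n}`. -/
def convPow (f : C →ₗ[k] k) : ℕ → (C →ₗ[k] k)
  | 0 => convOne k
  | n + 1 => conv k f (convPow f n)

/-- The convolution exponential `∑_{n=0}^{4} (1/n!) f^{*n}` (all higher convolution powers
vanish for the functionals considered here). -/
def expConv (f : C →ₗ[k] k) : C →ₗ[k] k :=
  ∑ n ∈ Finset.range 5, ((n.factorial : k)⁻¹ • convPow k f n)

end Conv

section Bialg

variable {A : Type*} [Ring A] [Bialgebra k A]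

/-- The left-hand side `(σ ⊗ ε) * σ(m ⊗ id)` of the Hopf 2-cocycle condition, as a
functional on `(A ⊗ A) ⊗ A`: on pure tensors it is `x ⊗ y ⊗ z ↦ ∑ σ(x₁ ⊗ y₁) σ(x₂y₂ ⊗ z)`. -/
def hopfLHS (σ : A ⊗[k] A →ₗ[k] k) : (A ⊗[k] A) ⊗[k] A →ₗ[k] k :=
  conv k (LinearMap.mul' k k ∘ₗ TensorProduct.map σ CoalgebraStruct.counit)
    (σ ∘ₗ TensorProduct.map (LinearMap.mul' k A) LinearMap.id)

/-- The right-hand side `(ε ⊗ σ) * σ(id ⊗ m)`: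
on pure tensors it is `x ⊗ y ⊗ z ↦ ∑ σ(y₁ ⊗ z₁) σ(x ⊗ y₂z₂)`. -/
def hopfRHS (σ : A ⊗[k] A →ₗ[k] k) : (A ⊗[k] A) ⊗[k] A →ₗ[k] k :=
  conv k
    (LinearMap.mul' k k ∘ₗ TensorProduct.map CoalgebraStruct.counit σ ∘ₗ
      (TensorProduct.assoc k A A A).toLinearMap)
    (σ ∘ₗ TensorProduct.map LinearMap.id (LinearMap.mul' k A) ∘ₗ
      (TensorProduct.assoc k A A A).toLinearMap)

/-- A Hopf 2-cocycle: a convolution invertible `σ : A ⊗ A →ₗ k` satisfying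
`∑ σ(x₁ ⊗ y₁) σ(x₂y₂ ⊗ z) = ∑ σ(y₁ ⊗ z₁) σ(x ⊗ y₂z₂)` for all `x, y, z ∈ A`. -/
def IsHopf2Cocycle (σ : A ⊗[k] A →ₗ[k] k) : Prop :=
  IsConvUnit k σ ∧ hopfLHS k σ = hopfRHS k σ

/-- The action `α ⇀ σ`: `x ⊗ y ↦ ∑ α(x₁) α(y₁) σ(x₂ ⊗ y₂) α⁻¹(x₃ y₃)`. -/
def act (α αinv : A →ₗ[k] k) (σ : A ⊗[k] A →ₗ[k] k) : A ⊗[k] A →ₗ[k] k :=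
  conv k (conv k (LinearMap.mul' k k ∘ₗ TensorProduct.map α α) σ)
    (αinv ∘ₗ LinearMap.mul' k A)

/-- `σ'` is cohomologous to `σ`: `σ' = α ⇀ σ` for some convolution invertible `α : A → k`. -/
def IsCohomologous (σ σ' : A ⊗[k] A →ₗ[k] k) : Prop :=
  ∃ α αinv : A →ₗ[k] k,
    conv k α αinv = convOne k ∧ conv k αinv α = convOne k ∧ act k α αinv σ = σ'

/-- First commutation condition `[η(id ⊗ m), ε ⊗ η]_* = 0`; on pure tensors it reads
`∑ η(x ⊗ y₁z₁) η(y₂ ⊗ z₂) = ∑ η(y₁ ⊗ z₁) η(x ⊗ y₂z₂)` for all `x, y, z ∈ A`. -/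
def Comm1 (η : A ⊗[k] A →ₗ[k] k) : Prop :=
  conv k (η ∘ₗ TensorProduct.map (LinearMap.id (M := A)) (LinearMap.mul' k A))
      (LinearMap.mul' k k ∘ₗ TensorProduct.map CoalgebraStruct.counit η)
    = conv k (LinearMap.mul' k k ∘ₗ TensorProduct.map CoalgebraStruct.counit η)
      (η ∘ₗ TensorProduct.map (LinearMap.id (M := A)) (LinearMap.mul' k A))

/-- Second commutation condition `[η(m ⊗ id), η ⊗ ε]_* = 0`; on pure tensors it reads
`∑ η(x₁y₁ ⊗ z) η(x₂ ⊗ y₂) = ∑ η(x₁ ⊗ y₁) η(x₂y₂ ⊗ z)` for all `x, y, z ∈ A`. -/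
def Comm2 (η : A ⊗[k] A →ₗ[k] k) : Prop :=
  conv k (η ∘ₗ TensorProduct.map (LinearMap.mul' k A) (LinearMap.id (M := A)))
      (LinearMap.mul' k k ∘ₗ TensorProduct.map η CoalgebraStruct.counit)
    = conv k (LinearMap.mul' k k ∘ₗ TensorProduct.map η CoalgebraStruct.counit)
      (η ∘ₗ TensorProduct.map (LinearMap.mul' k A) (LinearMap.id (M := A)))

end Bialg

section Bside

variable {B : Type*} [Ring B] [Algebra k B]

/-- `x12 := x1 x2 - q12 x2 x1`. -/
def x12 (q12 : k) (X1 X2 : B) : B := X1 * X2 - q12 • (X2 * X1)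

/-- The PBW basis `(1, x1, x2, x12, x12 x1, x2 x1, x2 x12, x2 x12 x1)` of `B`. -/
def bbVec (q12 : k) (X1 X2 : B) : Fin 8 → B :=
  ![1, X1, X2, x12 k q12 X1 X2, x12 k q12 X1 X2 * X1, X2 * X1,
    X2 * x12 k q12 X1 X2, X2 * x12 k q12 X1 X2 * X1]

/-- The bilinear form on `B` determined by a matrix of values on the basis `bB`. -/
def ofMat (bB : Module.Basis (Fin 8) k B) (M : Fin 8 → Fin 8 → k) : B →ₗ[k] B →ₗ[k] k :=
  bB.constr k fun i => bB.constr k fun j => M i j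

/-- Hochschild 2-cocycle with trivial coefficients:
`ε(a) η(b,c) + η(a,bc) = η(ab,c) + η(a,b) ε(c)`. -/
def IsHochschild2Cocycle (ε : B →ₐ[k] k) (η : B →ₗ[k] B →ₗ[k] k) : Prop :=
  ∀ a b c : B, ε a * η b c + η a (b * c) = η (a * b) c + η a b * ε c

/-- Hochschild 2-coboundary with trivial coefficients:
`η(a,b) = ε(a) f(b) - f(ab) + f(a) ε(b)` for some linear `f : B → k`. -/
def IsHochschild2Coboundary (ε : B →ₐ[k] k) (η : B →ₗ[k] B →ₗ[k] k) : Prop :=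
  ∃ f : B →ₗ[k] k, ∀ a b : B, η a b = ε a * f b - f (a * b) + f a * ε b

/-- `Γ`-invariance of a bilinear form on `B` with respect to the automorphisms `φ1, φ2`
given by conjugation by `g1, g2`. -/
def IsGammaInvariant (φ1 φ2 : B →ₐ[k] B) (η : B →ₗ[k] B →ₗ[k] k) : Prop :=
  (∀ a b : B, η (φ1 a) (φ1 b) = η a b) ∧ (∀ a b : B, η (φ2 a) (φ2 b) = η a b)

/-- The defining properties of the conjugation automorphisms `φᵢ(xⱼ) = qᵢⱼ xⱼ`. -/
def PhiSetup (q12 : k) (X1 X2 : B) (φ1 φ2 : B →ₐ[k] B) : Prop :=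
  Function.Bijective φ1 ∧ Function.Bijective φ2 ∧
    φ1 X1 = (-1 : k) • X1 ∧ φ1 X2 = q12 • X2 ∧
    φ2 X1 = (-q12) • X1 ∧ φ2 X2 = (-1 : k) • X2

/-- Matrix of values of `ξ0` on the basis. -/
def mXi0 : Fin 8 → Fin 8 → k := fun i j => if i = 0 ∧ j = 0 then 1 else 0

/-- Matrix of values of `ξ1 = ξ₁¹` on the basis. -/
def mXi1 : Fin 8 → Fin 8 → k := fun i j => if i = 1 ∧ j = 1 then 1 else 0

/-- Matrix of values of `ξ2 = ξ₂²` on the basis. -/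
def mXi2 : Fin 8 → Fin 8 → k := fun i j => if i = 2 ∧ j = 2 then 1 else 0

/-- Matrix of values of `ξ121 = ξ²₁₂₁` on the basis
(order: 1, x1, x2, x12, x12x1, x2x1, x2x12, x2x12x1). -/
def mXi121 (q12 : k) : Fin 8 → Fin 8 → k := fun i j =>
  if i = 2 ∧ j = 4 then 1
  else if i = 6 ∧ j = 1 then 1
  else if i = 5 ∧ j = 5 then 1
  else if i = 3 ∧ j = 3 then 1
  else if i = 3 ∧ j = 5 then -q12
  else if i = 5 ∧ j = 3 then -q12
  else 0

/-- Matrix of values of `ξ212 = ξ¹₂₁₂` on the basis. -/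
def mXi212 : Fin 8 → Fin 8 → k := fun i j =>
  if i = 1 ∧ j = 6 then 1
  else if i = 3 ∧ j = 3 then 1
  else if i = 4 ∧ j = 2 then 1
  else 0

/-- Matrix of values of the bilinear form `T_λ` of the Hopf 2-cocycle `σ_λ` on the basis
(here `q21 = -q12`). -/
def mT (q12 l1 l2 l12 : k) : Fin 8 → Fin 8 → k := fun i j =>
  if i = 0 ∧ j = 0 then 1
  else if i = 1 ∧ j = 1 then l1
  else if i = 2 ∧ j = 2 then l2
  else if i = 3 ∧ j = 3 then l12
  else if i = 1 ∧ j = 6 then l12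
  else if i = 2 ∧ j = 4 then 2 * q12 * l1 * l2
  else if i = 5 ∧ j = 5 then -(-q12) * l1 * l2
  else if i = 6 ∧ j = 6 then -q12 * l2 * l12
  else if i = 4 ∧ j = 2 then 2 * q12 * l1 * l2 + l12
  else if i = 4 ∧ j = 4 then q12 * l12 * l1 + 4 * l1 ^ 2 * l2
  else if i = 7 ∧ j = 7 then q12 * l2 * l12 * l1
  else 0

/-- The cocycle `ξ0`. -/
def xi0 (bB : Module.Basis (Fin 8) k B) : B →ₗ[k] B →ₗ[k] k := ofMat k bB (mXi0 k)

/-- The cocycle `ξ1`. -/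
def xi1 (bB : Module.Basis (Fin 8) k B) : B →ₗ[k] B →ₗ[k] k := ofMat k bB (mXi1 k)

/-- The cocycle `ξ2`. -/
def xi2 (bB : Module.Basis (Fin 8) k B) : B →ₗ[k] B →ₗ[k] k := ofMat k bB (mXi2 k)

/-- The cocycle `ξ121`. -/
def xi121 (q12 : k) (bB : Module.Basis (Fin 8) k B) : B →ₗ[k] B →ₗ[k] k :=
  ofMat k bB (mXi121 k q12)

/-- The cocycle `ξ212`. -/
def xi212 (bB : Module.Basis (Fin 8) k B) : B →ₗ[k] B →ₗ[k] k := ofMat k bB (mXi212 k)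

/-- Number of occurrences of the letter `x1` in each basis monomial. -/
def n1 : Fin 8 → ℕ := ![0, 1, 0, 1, 2, 1, 1, 2]

/-- Number of occurrences of the letter `x2` in each basis monomial. -/
def n2 : Fin 8 → ℕ := ![0, 0, 1, 1, 1, 1, 2, 2]

/-- `χ_{b_j}(g_i)`: the scalar with `g_i b_j g_i⁻¹ = χ_{b_j}(g_i) b_j`, namely
`q_{i1}^{n1(j)} q_{i2}^{n2(j)}` with `q11 = q22 = -1`, `q21 = -q12`. -/
def chiB (q12 : k) : Fin 2 → Fin 8 → k := fun i j =>
  if i = 0 then (-1 : k) ^ n1 j * q12 ^ n2 j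
  else (-q12) ^ n1 j * (-1 : k) ^ n2 j

/-- `χ_{b_j}(g1^a g2^c)`. -/
def chiG (q12 : k) (j : Fin 8) (a c : Fin 2) : k :=
  chiB k q12 0 j ^ (a : ℕ) * chiB k q12 1 j ^ (c : ℕ)

variable {A : Type*} [Ring A] [Bialgebra k A]

/-- The extension `η_A : A ⊗ A →ₗ k` of a bilinear form `η` on `B`, determined on the
basis of `A ⊗ A` by `η_A(b g ⊗ b' g') = χ_{b'}(g) η(b, b')`. -/
def extA (q12 : k) (bB : Module.Basis (Fin 8) k B)
    (bA : Module.Basis (Fin 8 × Fin 2 × Fin 2) k A)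
    (η : B →ₗ[k] B →ₗ[k] k) : A ⊗[k] A →ₗ[k] k :=
  (bA.tensorProduct bA).constr k fun p =>
    chiG k q12 p.2.1 p.1.2.1 p.1.2.2 * η (bB p.1.1) (bB p.2.1)

/-- The Hopf 2-cocycle `σ_λ : A ⊗ A → k` associated to the cleft object `E(λ)`. -/
def sigmaLam (q12 : k) (bB : Module.Basis (Fin 8) k B)
    (bA : Module.Basis (Fin 8 × Fin 2 × Fin 2) k A) (l1 l2 l12 : k) : A ⊗[k] A →ₗ[k] k :=
  extA k q12 bB bA (ofMat k bB (mT k q12 l1 l2 l12))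

end Bside

/-- All defining data of the situation of the paper: `q12 = ±1`; `B` is the Nichols algebra
of Cartan type `A₂` with `q = -1` (presented by `x1² = x2² = x12² = 0`, with its PBW basis
and its augmentation `εB`), and `A = B # H` is a Hopf algebra containing `x1, x2, g1, g2`
subject to the group/commutation relations, with its basis `{b g1^a g2^c}` and the standard
comultiplication and counit on generators. -/
structure Setup (q12 : k) {B : Type*} [Ring B] [Algebra k B] (X1 X2 : B)
    (bB : Module.Basis (Fin 8) k B) (εB : B →ₐ[k] k)
    {A : Type*} [Ring A] [HopfAlgebra k A] (a1 a2 g1 g2 : A)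
    (bA : Module.Basis (Fin 8 × Fin 2 × Fin 2) k A) : Prop where
  hq : q12 = 1 ∨ q12 = -1
  hbB : ∀ j, bB j = bbVec k q12 X1 X2 j
  hX1 : X1 ^ 2 = 0
  hX2 : X2 ^ 2 = 0
  hX12 : x12 k q12 X1 X2 ^ 2 = 0
  hε1 : εB X1 = 0
  hε2 : εB X2 = 0
  hbA : ∀ p : Fin 8 × Fin 2 × Fin 2,
    bA p = bbVec k q12 a1 a2 p.1 * g1 ^ (p.2.1 : ℕ) * g2 ^ (p.2.2 : ℕ)
  hg1 : g1 ^ 2 = 1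
  hg2 : g2 ^ 2 = 1
  hgg : g1 * g2 = g2 * g1
  hg1a1 : g1 * a1 = (-1 : k) • (a1 * g1)
  hg1a2 : g1 * a2 = q12 • (a2 * g1)
  hg2a1 : g2 * a1 = (-q12) • (a1 * g2)
  hg2a2 : g2 * a2 = (-1 : k) • (a2 * g2)
  ha1 : a1 ^ 2 = 0
  ha2 : a2 ^ 2 = 0
  ha12 : x12 k q12 a1 a2 ^ 2 = 0
  hcomul_g1 : Coalgebra.comul (R := k) g1 = g1 ⊗ₜ[k] g1
  hcomul_g2 : Coalgebra.comul (R := k) g2 = g2 ⊗ₜ[k] g2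
  hcomul_a1 : Coalgebra.comul (R := k) a1 = a1 ⊗ₜ[k] 1 + g1 ⊗ₜ[k] a1
  hcomul_a2 : Coalgebra.comul (R := k) a2 = a2 ⊗ₜ[k] 1 + g2 ⊗ₜ[k] a2
  hcounit_g1 : Coalgebra.counit (R := k) g1 = 1
  hcounit_g2 : Coalgebra.counit (R := k) g2 = 1
  hcounit_a1 : Coalgebra.counit (R := k) a1 = 0
  hcounit_a2 : Coalgebra.counit (R := k) a2 = 0

end Defs

-- ===== auxiliary machinery for statement_7 =====

section S7Aux

variable {k : Type*} [Field k]

/-- `ξ121` matrix over `ℤ`, with `e` standing for `q12`. -/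
def s7Mz (e : ℤ) : Fin 8 → Fin 8 → ℤ := fun i j =>
  if i = 2 ∧ j = 4 then 1
  else if i = 6 ∧ j = 1 then 1
  else if i = 5 ∧ j = 5 then 1
  else if i = 3 ∧ j = 3 then 1
  else if i = 3 ∧ j = 5 then -e
  else if i = 5 ∧ j = 3 then -e
  else 0

/-- Structure constants over `ℤ`: `b_i * b_j = ∑ m, s7Pz e i j m • b_m`. -/
def s7Pz (e : ℤ) : Fin 8 → Fin 8 → Fin 8 → ℤ := fun i j m =>
  if i = 0 then (if m = j then 1 else 0)
  else if j = 0 then (if m = i then 1 else 0)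
  else if i = 1 ∧ j = 2 then (if m = 3 then 1 else if m = 5 then e else 0)
  else if i = 1 ∧ j = 3 then (if m = 4 then -e else 0)
  else if i = 1 ∧ j = 5 then (if m = 4 then 1 else 0)
  else if i = 1 ∧ j = 6 then (if m = 7 then -1 else 0)
  else if i = 2 ∧ j = 1 then (if m = 5 then 1 else 0)
  else if i = 2 ∧ j = 3 then (if m = 6 then 1 else 0)
  else if i = 2 ∧ j = 4 then (if m = 7 then 1 else 0)
  else if i = 3 ∧ j = 1 then (if m = 4 then 1 else 0)
  else if i = 3 ∧ j = 2 then (if m = 6 then -e else 0)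
  else if i = 3 ∧ j = 5 then (if m = 7 then -e else 0)
  else if i = 4 ∧ j = 2 then (if m = 7 then -1 else 0)
  else if i = 5 ∧ j = 2 then (if m = 6 then 1 else 0)
  else if i = 5 ∧ j = 3 then (if m = 7 then -e else 0)
  else if i = 5 ∧ j = 5 then (if m = 7 then 1 else 0)
  else if i = 6 ∧ j = 1 then (if m = 7 then 1 else 0)
  else 0

/-- Structure constants in `k`, with `q` standing for `q12`. -/
def s7Pk (q : k) : Fin 8 → Fin 8 → Fin 8 → k := fun i j m =>
  if i = 0 then (if m = j then 1 else 0)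
  else if j = 0 then (if m = i then 1 else 0)
  else if i = 1 ∧ j = 2 then (if m = 3 then 1 else if m = 5 then q else 0)
  else if i = 1 ∧ j = 3 then (if m = 4 then -q else 0)
  else if i = 1 ∧ j = 5 then (if m = 4 then 1 else 0)
  else if i = 1 ∧ j = 6 then (if m = 7 then -1 else 0)
  else if i = 2 ∧ j = 1 then (if m = 5 then 1 else 0)
  else if i = 2 ∧ j = 3 then (if m = 6 then 1 else 0)
  else if i = 2 ∧ j = 4 then (if m = 7 then 1 else 0)
  else if i = 3 ∧ j = 1 then (if m = 4 then 1 else 0)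
  else if i = 3 ∧ j = 2 then (if m = 6 then -q else 0)
  else if i = 3 ∧ j = 5 then (if m = 7 then -q else 0)
  else if i = 4 ∧ j = 2 then (if m = 7 then -1 else 0)
  else if i = 5 ∧ j = 2 then (if m = 6 then 1 else 0)
  else if i = 5 ∧ j = 3 then (if m = 7 then -q else 0)
  else if i = 5 ∧ j = 5 then (if m = 7 then 1 else 0)
  else if i = 6 ∧ j = 1 then (if m = 7 then 1 else 0)
  else 0

theorem s7_int_key : ∀ e : ℤ, e = 1 ∨ e = -1 → ∀ i j l : Fin 8,
    (if i = 0 then 1 else 0) * s7Mz e j l + ∑ m, s7Pz e j l m * s7Mz e i m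
      = ∑ m, s7Pz e i j m * s7Mz e m l + s7Mz e i j * (if l = 0 then 1 else 0) := by
  rintro e (rfl | rfl) <;> decide

theorem s7_castM (e : ℤ) (i j : Fin 8) :
    ((s7Mz e i j : ℤ) : k) = mXi121 k ((e : ℤ) : k) i j := by
  simp only [s7Mz, mXi121, apply_ite (fun z : ℤ => (z : k)), Int.cast_one, Int.cast_zero,
    Int.cast_neg]

theorem s7_castPk (e : ℤ) (i j m : Fin 8) :
    ((s7Pz e i j m : ℤ) : k) = s7Pk ((e : ℤ) : k) i j m := by
  simp only [s7Pz, s7Pk, apply_ite (fun z : ℤ => (z : k)), Int.cast_one, Int.cast_zero,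
    Int.cast_neg]

theorem s7_key_master (e : ℤ) (he : e = 1 ∨ e = -1) (i j l : Fin 8) :
    (if i = 0 then (1:k) else 0) * mXi121 k ((e : ℤ) : k) j l
        + ∑ m, s7Pk ((e : ℤ) : k) j l m * mXi121 k ((e : ℤ) : k) i m
      = (∑ m, s7Pk ((e : ℤ) : k) i j m * mXi121 k ((e : ℤ) : k) m l)
        + mXi121 k ((e : ℤ) : k) i j * (if l = 0 then 1 else 0) := by
  have h := congrArg (fun z : ℤ => (z : k)) (s7_int_key e he i j l)
  simpa only [Int.cast_add, Int.cast_mul, Int.cast_sum, apply_ite (fun z : ℤ => (z : k)),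
    Int.cast_one, Int.cast_zero, s7_castM, s7_castPk] using h

theorem s7_key (q : k) (hq : q = 1 ∨ q = -1) (i j l : Fin 8) :
    (if i = 0 then (1:k) else 0) * mXi121 k q j l
        + ∑ m, s7Pk q j l m * mXi121 k q i m
      = (∑ m, s7Pk q i j m * mXi121 k q m l)
        + mXi121 k q i j * (if l = 0 then 1 else 0) := by
  rcases hq with rfl | rfl
  · simpa using s7_key_master (k := k) 1 (Or.inl rfl) i j l
  · simpa using s7_key_master (k := k) (-1) (Or.inr rfl) i j l

variable {B : Type*} [Ring B] [Algebra k B]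

theorem s7_eps (q : k) (X1 X2 : B)
    (bB : Module.Basis (Fin 8) k B) (hbB : ∀ j, bB j = bbVec k q X1 X2 j)
    (εB : B →ₐ[k] k) (hε1 : εB X1 = 0) (hε2 : εB X2 = 0) (i : Fin 8) :
    εB (bB i) = if i = 0 then 1 else 0 := by
  have hb0 : bB 0 = 1 := by rw [hbB]; rfl
  have hb1 : bB 1 = X1 := by rw [hbB]; rfl
  have hb2 : bB 2 = X2 := by rw [hbB]; rfl
  have hb3 : bB 3 = X1 * X2 - q • (X2 * X1) := by rw [hbB]; rfl
  have hb4 : bB 4 = (X1 * X2 - q • (X2 * X1)) * X1 := by rw [hbB]; rfl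
  have hb5 : bB 5 = X2 * X1 := by rw [hbB]; rfl
  have hb6 : bB 6 = X2 * (X1 * X2 - q • (X2 * X1)) := by rw [hbB]; rfl
  have hb7 : bB 7 = X2 * (X1 * X2 - q • (X2 * X1)) * X1 := by rw [hbB]; rfl
  have hm0 : ∀ (h : 0 < 8), (⟨0, h⟩ : Fin 8) = (0 : Fin 8) := fun _ => rfl
  have hm1 : ∀ (h : 1 < 8), (⟨1, h⟩ : Fin 8) = (1 : Fin 8) := fun _ => rfl
  have hm2 : ∀ (h : 2 < 8), (⟨2, h⟩ : Fin 8) = (2 : Fin 8) := fun _ => rfl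
  have hm3 : ∀ (h : 3 < 8), (⟨3, h⟩ : Fin 8) = (3 : Fin 8) := fun _ => rfl
  have hm4 : ∀ (h : 4 < 8), (⟨4, h⟩ : Fin 8) = (4 : Fin 8) := fun _ => rfl
  have hm5 : ∀ (h : 5 < 8), (⟨5, h⟩ : Fin 8) = (5 : Fin 8) := fun _ => rfl
  have hm6 : ∀ (h : 6 < 8), (⟨6, h⟩ : Fin 8) = (6 : Fin 8) := fun _ => rfl
  have hm7 : ∀ (h : 7 < 8), (⟨7, h⟩ : Fin 8) = (7 : Fin 8) := fun _ => rfl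
  fin_cases i <;>
    simp only [hm0, hm1, hm2, hm3, hm4, hm5, hm6, hm7, hb0, hb1, hb2, hb3, hb4, hb5, hb6,
      hb7] <;>
    simp [hε1, hε2]

theorem s7_prod_table (q : k) (he2 : q * q = 1) (X1 X2 : B)
    (hX1 : X1 ^ 2 = 0) (hX2 : X2 ^ 2 = 0) (hX12 : x12 k q X1 X2 ^ 2 = 0)
    (bB : Module.Basis (Fin 8) k B) (hbB : ∀ j, bB j = bbVec k q X1 X2 j)
    (i j : Fin 8) :
    bB i * bB j = ∑ m, s7Pk q i j m • bB m := by
  have l11 : X1 * X1 = 0 := by rw [← pow_two]; exact hX1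
  have l22 : X2 * X2 = 0 := by rw [← pow_two]; exact hX2
  have l11' : ∀ z : B, X1 * (X1 * z) = 0 := fun z => by rw [← mul_assoc, l11, zero_mul]
  have l22' : ∀ z : B, X2 * (X2 * z) = 0 := fun z => by rw [← mul_assoc, l22, zero_mul]
  have l4 : X1 * (X2 * (X1 * X2)) = -(X2 * (X1 * (X2 * X1))) := by
    simp only [x12, pow_two] at hX12
    simp only [sub_mul, mul_sub, smul_mul_assoc, mul_smul_comm, smul_smul, mul_assoc,
      l11', l22', l11, l22, mul_zero, smul_zero, sub_zero, zero_sub, he2, one_smul,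
      smul_neg, neg_neg, sub_neg_eq_add] at hX12
    linear_combination (norm := abel) hX12
  have l4' : ∀ z : B, X1 * (X2 * (X1 * (X2 * z))) = -(X2 * (X1 * (X2 * (X1 * z)))) := by
    intro z
    have h := congrArg (· * z) l4
    simpa only [mul_assoc, neg_mul] using h
  have hb0 : bB 0 = 1 := by rw [hbB]; rfl
  have hb1 : bB 1 = X1 := by rw [hbB]; rfl
  have hb2 : bB 2 = X2 := by rw [hbB]; rfl
  have hb3 : bB 3 = X1 * X2 - q • (X2 * X1) := by rw [hbB]; rfl
  have hb4 : bB 4 = (X1 * X2 - q • (X2 * X1)) * X1 := by rw [hbB]; rfl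
  have hb5 : bB 5 = X2 * X1 := by rw [hbB]; rfl
  have hb6 : bB 6 = X2 * (X1 * X2 - q • (X2 * X1)) := by rw [hbB]; rfl
  have hb7 : bB 7 = X2 * (X1 * X2 - q • (X2 * X1)) * X1 := by rw [hbB]; rfl
  have hm0 : ∀ (h : 0 < 8), (⟨0, h⟩ : Fin 8) = (0 : Fin 8) := fun _ => rfl
  have hm1 : ∀ (h : 1 < 8), (⟨1, h⟩ : Fin 8) = (1 : Fin 8) := fun _ => rfl
  have hm2 : ∀ (h : 2 < 8), (⟨2, h⟩ : Fin 8) = (2 : Fin 8) := fun _ => rfl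
  have hm3 : ∀ (h : 3 < 8), (⟨3, h⟩ : Fin 8) = (3 : Fin 8) := fun _ => rfl
  have hm4 : ∀ (h : 4 < 8), (⟨4, h⟩ : Fin 8) = (4 : Fin 8) := fun _ => rfl
  have hm5 : ∀ (h : 5 < 8), (⟨5, h⟩ : Fin 8) = (5 : Fin 8) := fun _ => rfl
  have hm6 : ∀ (h : 6 < 8), (⟨6, h⟩ : Fin 8) = (6 : Fin 8) := fun _ => rfl
  have hm7 : ∀ (h : 7 < 8), (⟨7, h⟩ : Fin 8) = (7 : Fin 8) := fun _ => rfl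
  fin_cases i <;> fin_cases j <;>
    simp only [hm0, hm1, hm2, hm3, hm4, hm5, hm6, hm7, Fin.sum_univ_eight, Fin.isValue,
      hb0, hb1, hb2, hb3, hb4, hb5, hb6, hb7] <;>
    simp [s7Pk, mul_sub, sub_mul, smul_sub, smul_smul, mul_smul_comm, smul_mul_assoc,
      mul_assoc, l11, l22, l11', l22', l4, l4', he2] <;>
    abel

end S7Aux

/-- The bilinear form `ξ121` is a Hochschild 2-cocycle on `B`. -/
theorem statement_7 {k : Type*} [Field k] [CharZero k] (q12 : k) (hq : q12 = 1 ∨ q12 = -1)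
    {B : Type*} [Ring B] [Algebra k B] (X1 X2 : B)
    (bB : Module.Basis (Fin 8) k B) (hbB : ∀ j, bB j = bbVec k q12 X1 X2 j)
    (hX1 : X1 ^ 2 = 0) (hX2 : X2 ^ 2 = 0) (hX12 : x12 k q12 X1 X2 ^ 2 = 0)
    (εB : B →ₐ[k] k) (hε1 : εB X1 = 0) (hε2 : εB X2 = 0) :
    IsHochschild2Cocycle k εB (xi121 k q12 bB) := by
  have he2 : q12 * q12 = 1 := by rcases hq with rfl | rfl <;> norm_num
  have hEta : ∀ i j : Fin 8, xi121 k q12 bB (bB i) (bB j) = mXi121 k q12 i j := by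
    intro i j
    simp [xi121, ofMat, Module.Basis.constr_basis]
  have hE : ∀ i : Fin 8, εB (bB i) = if i = 0 then 1 else 0 :=
    s7_eps q12 X1 X2 bB hbB εB hε1 hε2
  set η := xi121 k q12 bB with hηdef
  have key : ∀ i j l : Fin 8,
      εB (bB i) * η (bB j) (bB l) + η (bB i) (bB j * bB l)
        = η (bB i * bB j) (bB l) + η (bB i) (bB j) * εB (bB l) := by
    intro i j l
    rw [s7_prod_table q12 he2 X1 X2 hX1 hX2 hX12 bB hbB i j,
      s7_prod_table q12 he2 X1 X2 hX1 hX2 hX12 bB hbB j l]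
    simp only [map_sum, map_smul, LinearMap.sum_apply, LinearMap.smul_apply,
      smul_eq_mul, hEta, hE]
    simpa using s7_key q12 hq i j l
  let f2 : B →ₗ[k] B →ₗ[k] B →ₗ[k] k :=
    { toFun := fun a => (LinearMap.mul k B).compr₂ (η a)
      map_add' := fun a b => by ext x y; simp
      map_smul' := fun c a => by ext x y; simp }
  let f4 : B →ₗ[k] B →ₗ[k] B →ₗ[k] k :=
    { toFun := fun a => (η a).smulRight εB.toLinearMap
      map_add' := fun a b => by ext x y; simp [add_mul]
      map_smul' := fun c a => by ext x y; simp [smul_eq_mul, mul_assoc] }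
  have hT : εB.toLinearMap.smulRight η + f2
      = (LinearMap.mul k B).compr₂ η + f4 := by
    refine bB.ext fun i => ?_
    refine bB.ext fun j => ?_
    refine bB.ext fun l => ?_
    simp only [LinearMap.add_apply, LinearMap.smulRight_apply, LinearMap.compr₂_apply,
      LinearMap.mul_apply', LinearMap.coe_mk, AddHom.coe_mk, AlgHom.toLinearMap_apply,
      LinearMap.smul_apply, smul_eq_mul, f2, f4]
    exact key i j l
  intro a b c
  have h := LinearMap.congr_fun (LinearMap.congr_fun (LinearMap.congr_fun hT a) b) c
  simpa only [LinearMap.add_apply, LinearMap.smulRight_apply, LinearMap.compr₂_apply,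
    LinearMap.mul_apply', LinearMap.coe_mk, AddHom.coe_mk, AlgHom.toLinearMap_apply,
    LinearMap.smul_apply, smul_eq_mul, f2, f4] using h


end PaperA2
end
end

section
/- Let x and y be elements of the homogeneous basis BB of degree 1. Then the bilinear form xi : B x B -> k determined on BB x BB by xi(b, b') = 1 if (b, b') = (y, x) and xi(b, b') = 0 for all other pairs of basis elements is a Hochschild 2-cocycle on B. -/
/-!
Common framework: convolution algebras, Hopf 2-cocycles, the Nichols algebra `B` of Cartan
type `A₂` with `q = -1`, its bosonization `A = B # H`, bilinear forms on `B` and their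
extensions to `A ⊗ A`, following García–Sánchez, "Hopf cocycles associated to pointed and
copointed deformations over S₃" (arXiv:2108.11432).
-/

open scoped TensorProduct
open TensorProduct

noncomputable section

namespace PaperA2

/-- Let `B` be an `ℕ`-graded algebra with `B₀ = k·1`, `ε` the projection
onto degree `0`, and `BB` a homogeneous basis containing `1`.  If `x = bb ix` and
`y = bb iy` are basis elements of degree `1`, then the bilinear form with
`ξ(b, b') = δ_{(b,b'),(y,x)}` on basis elements is a Hochschild 2-cocycle on `B`. -/
theorem statement_9 {k : Type*} [Field k] {B : Type*} [Ring B] [Algebra k B]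
    (𝒜 : ℕ → Submodule k B) [GradedAlgebra 𝒜]
    (h0 : 𝒜 0 = Submodule.span k {(1 : B)})
    (ε : B →ₐ[k] k) (hε : ∀ n : ℕ, n ≠ 0 → ∀ b ∈ 𝒜 n, ε b = 0)
    {ι : Type*} [DecidableEq ι] (bb : Module.Basis ι k B)
    (hhom : ∀ i : ι, ∃ n : ℕ, bb i ∈ 𝒜 n)
    (i1 : ι) (hone : bb i1 = 1)
    (ix iy : ι) (hx : bb ix ∈ 𝒜 1) (hy : bb iy ∈ 𝒜 1) :
    IsHochschild2Cocycle k ε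
      (bb.constr k fun i => bb.constr k fun j =>
        if i = iy ∧ j = ix then (1 : k) else 0) := by
  classical
  -- degree-1 projection as a linear map
  set π : B →ₗ[k] B := (𝒜 1).subtype ∘ₗ
      (DirectSum.component k ℕ (fun n => 𝒜 n) 1) ∘ₗ
      (DirectSum.decomposeLinearEquiv 𝒜).toLinearMap with hπdef
  have hπ : ∀ u : B, π u = ((DirectSum.decompose 𝒜 u) 1 : B) := by
    intro u; rfl
  -- basis elements cannot live in two different degrees
  have huniq : ∀ (i : ι) (m : ℕ), bb i ∈ 𝒜 m → m ≠ 1 → bb i ∉ 𝒜 1 := by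
    intro i m hm hm1 h1
    have h2 : ((DirectSum.decompose 𝒜 (bb i)) m : B) = bb i :=
      DirectSum.decompose_of_mem_same 𝒜 hm
    have h3 : ((DirectSum.decompose 𝒜 (bb i)) m : B) = 0 :=
      DirectSum.decompose_of_mem_ne 𝒜 h1 (Ne.symm hm1)
    exact bb.ne_zero i (by rw [← h2, h3])
  -- coordinates of degree-1 basis vectors kill homogeneous elements of degree ≠ 1
  have key : ∀ j : ι, bb j ∈ 𝒜 1 → ∀ m : ℕ, m ≠ 1 → ∀ u ∈ 𝒜 m, bb.coord j u = 0 := by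
    intro j hj m hm u hu
    have hcomp : bb.coord j ∘ₗ π = bb.coord j := by
      apply bb.ext
      intro i
      obtain ⟨n, hn⟩ := hhom i
      by_cases h1 : n = 1
      · subst h1
        simp [hπ, DirectSum.decompose_of_mem_same 𝒜 hn]
      · have hπ0 : π (bb i) = 0 := by
          simp [hπ, DirectSum.decompose_of_mem_ne 𝒜 hn h1]
        have hij : i ≠ j := by
          rintro rfl; exact huniq i n hn h1 hj
        simp [hπ0, Module.Basis.coord_apply, Module.Basis.repr_self, Finsupp.single_apply, hij]
    have hπ0 : π u = 0 := by
      simp [hπ, DirectSum.decompose_of_mem_ne 𝒜 hu hm]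
    calc bb.coord j u = bb.coord j (π u) := (LinearMap.congr_fun hcomp u).symm
      _ = 0 := by rw [hπ0, map_zero]
  -- the coordinate of a degree-1 basis vector is an ε-derivation
  have hder : ∀ j : ι, bb j ∈ 𝒜 1 → ∀ a b : B,
      bb.coord j (a * b) = ε a * bb.coord j b + bb.coord j a * ε b := by
    intro j hj
    suffices h : (LinearMap.mul k B).compr₂ (bb.coord j)
        = (ε.toLinearMap).smulRight (bb.coord j) + (bb.coord j).smulRight ε.toLinearMap by
      intro a b
      have := LinearMap.congr_fun (LinearMap.congr_fun h a) b
      simpa [smul_eq_mul] using this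
    apply bb.ext; intro i; apply bb.ext; intro i'
    obtain ⟨m, hm⟩ := hhom i
    obtain ⟨n, hn⟩ := hhom i'
    simp only [LinearMap.compr₂_apply, LinearMap.mul_apply', LinearMap.add_apply,
      LinearMap.smulRight_apply, LinearMap.smul_apply, AlgHom.toLinearMap_apply, smul_eq_mul]
    by_cases hm0 : m = 0
    · rw [hm0, h0] at hm
      obtain ⟨c, hc⟩ := Submodule.mem_span_singleton.mp hm
      have hc0 : bb.coord j (bb i) = 0 :=
        key j hj 0 (by norm_num) _ (by rw [h0]; exact hm)
      have hεa : ε (bb i) = c := by rw [← hc, map_smul, map_one, smul_eq_mul, mul_one]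
      have hprod : bb i * bb i' = c • bb i' := by rw [← hc, smul_mul_assoc, one_mul]
      rw [hprod, map_smul, hεa, hc0, smul_eq_mul]; ring
    by_cases hn0 : n = 0
    · rw [hn0, h0] at hn
      obtain ⟨c, hc⟩ := Submodule.mem_span_singleton.mp hn
      have hc0 : bb.coord j (bb i') = 0 :=
        key j hj 0 (by norm_num) _ (by rw [h0]; exact hn)
      have hεb : ε (bb i') = c := by rw [← hc, map_smul, map_one, smul_eq_mul, mul_one]
      have hprod : bb i * bb i' = c • bb i := by rw [← hc, mul_smul_comm, mul_one]
      rw [hprod, map_smul, hεb, hc0, smul_eq_mul]; ring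
    · have h1 : ε (bb i) = 0 := hε m hm0 _ hm
      have h2 : ε (bb i') = 0 := hε n hn0 _ hn
      have h3 : bb.coord j (bb i * bb i') = 0 :=
        key j hj (m + n) (by omega) _ (SetLike.mul_mem_graded hm hn)
      rw [h1, h2, h3]; ring
  -- factor the bilinear form
  have hfac : ∀ a b : B,
      (bb.constr (M' := B →ₗ[k] k) k fun i => bb.constr k fun j =>
        if i = iy ∧ j = ix then (1 : k) else 0) a b
      = bb.coord iy a * bb.coord ix b := by
    have h : (bb.constr (M' := B →ₗ[k] k) k fun i => bb.constr k fun j =>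
        if i = iy ∧ j = ix then (1 : k) else 0)
        = (bb.coord iy).smulRight (bb.coord ix) := by
      apply bb.ext; intro i; apply bb.ext; intro i'
      simp only [Module.Basis.constr_basis, LinearMap.smulRight_apply, Module.Basis.coord_apply,
        Module.Basis.repr_self, Finsupp.single_apply, smul_eq_mul]
      by_cases h1 : i = iy <;> by_cases h2 : i' = ix <;> simp [h1, h2]
    intro a b
    rw [h]
    simp [smul_eq_mul]
  intro a b c
  rw [hfac, hfac, hfac, hfac, hder ix hx, hder iy hy]
  ring


end PaperA2
end
end

section
/- Let gamma, gamma' : B -> E(lambda) be the linear maps determined on the basis BB by: gamma(1) = 1, gamma(x1) = y1, gamma(x2) = y2, gamma(x12) = y12, gamma(x2*x1) = y2*y1, gamma(x12*x1) = y12*y1 - 2*q21*lambda1*y2, gamma(x2*x12) = y2*y12, gamma(x2*x12*x1) = y2*y12*y1; and gamma'(1) = 1, gamma'(x1) = -y1, gamma'(x2) = -y2, gamma'(x12) = y12 + 2*q12*y2*y1, gamma'(x2*x1) = q21*y12 - y2*y1, gamma'(x12*x1) = -y12*y1 + 2*q21*lambda1*y2, gamma'(x2*x12) = -y2*y12, gamma'(x2*x12*x1)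 = y2*y12*y1 - lambda12. Then gamma * gamma' = gamma' * gamma = u o eps, that is, sum gamma(b_(1)) gamma'(b_(2)) = eps(b)*1 = sum gamma'(b_(1)) gamma(b_(2)) for all b in B; in particular gamma is convolution invertible with convolution inverse gamma'. -/
/-!
Common framework: convolution algebras, Hopf 2-cocycles, the Nichols algebra `B` of Cartan
type `A₂` with `q = -1`, its bosonization `A = B # H`, bilinear forms on `B` and their
extensions to `A ⊗ A`, following García–Sánchez, "Hopf cocycles associated to pointed and
copointed deformations over S₃" (arXiv:2108.11432).
-/

open scoped TensorProduct
open TensorProduct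

noncomputable section

namespace PaperA2

set_option maxHeartbeats 2000000 in
/-- With `γ, γ' : B → E(λ)` the linear maps determined on the PBW basis
as in Lemma 5.1 of the paper, `γ * γ' = γ' * γ = u ∘ ε`; i.e., `γ` is convolution
invertible with convolution inverse `γ'`. -/
theorem statement_11 {k : Type*} [Field k] [CharZero k] (q12 : k) (hq : q12 = 1 ∨ q12 = -1)
    {B : Type*} [Ring B] [Algebra k B] (X1 X2 : B)
    (bB : Module.Basis (Fin 8) k B) (hbB : ∀ j, bB j = bbVec k q12 X1 X2 j)
    (hX1 : X1 ^ 2 = 0) (hX2 : X2 ^ 2 = 0) (hX12 : x12 k q12 X1 X2 ^ 2 = 0)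
    (εB : B →ₐ[k] k) (hε1 : εB X1 = 0) (hε2 : εB X2 = 0)
    (Δ : B →ₗ[k] B ⊗[k] B)
    (hΔ0 : Δ 1 = (1 : B) ⊗ₜ[k] (1 : B))
    (hΔ1 : Δ X1 = X1 ⊗ₜ[k] (1 : B) + (1 : B) ⊗ₜ[k] X1)
    (hΔ2 : Δ X2 = X2 ⊗ₜ[k] (1 : B) + (1 : B) ⊗ₜ[k] X2)
    (hΔ3 : Δ (x12 k q12 X1 X2) =
      (x12 k q12 X1 X2) ⊗ₜ[k] (1 : B) + (1 : B) ⊗ₜ[k] (x12 k q12 X1 X2) +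
        (2 : k) • (X1 ⊗ₜ[k] X2))
    (hΔ5 : Δ (X2 * X1) =
      (X2 * X1) ⊗ₜ[k] (1 : B) + (1 : B) ⊗ₜ[k] (X2 * X1) + X2 ⊗ₜ[k] X1 +
        (-q12) • (X1 ⊗ₜ[k] X2))
    (hΔ4 : Δ (x12 k q12 X1 X2 * X1) =
      (x12 k q12 X1 X2 * X1) ⊗ₜ[k] (1 : B) + (1 : B) ⊗ₜ[k] (x12 k q12 X1 X2 * X1) -
        (-q12) • (X1 ⊗ₜ[k] (x12 k q12 X1 X2)) + (x12 k q12 X1 X2) ⊗ₜ[k] X1 +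
        (2 : k) • (X1 ⊗ₜ[k] (X2 * X1)))
    (hΔ6 : Δ (X2 * x12 k q12 X1 X2) =
      (X2 * x12 k q12 X1 X2) ⊗ₜ[k] (1 : B) + (1 : B) ⊗ₜ[k] (X2 * x12 k q12 X1 X2) +
        X2 ⊗ₜ[k] (x12 k q12 X1 X2) - (-q12) • ((x12 k q12 X1 X2) ⊗ₜ[k] X2) +
        (2 : k) • ((X2 * X1) ⊗ₜ[k] X2))
    (hΔ7 : Δ (X2 * x12 k q12 X1 X2 * X1) =
      (X2 * x12 k q12 X1 X2 * X1) ⊗ₜ[k] (1 : B) +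
        (1 : B) ⊗ₜ[k] (X2 * x12 k q12 X1 X2 * X1) +
        (2 : k) • ((X2 * X1) ⊗ₜ[k] (X2 * X1)) - X1 ⊗ₜ[k] (X2 * x12 k q12 X1 X2) -
        (-q12) • ((x12 k q12 X1 X2) ⊗ₜ[k] (X2 * X1)) -
        (x12 k q12 X1 X2 * X1) ⊗ₜ[k] X2 + X2 ⊗ₜ[k] (x12 k q12 X1 X2 * X1) -
        (-q12) • ((X2 * X1) ⊗ₜ[k] (x12 k q12 X1 X2)) +
        (X2 * x12 k q12 X1 X2) ⊗ₜ[k] X1)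
    (hcoassoc : (TensorProduct.assoc k B B B).toLinearMap ∘ₗ
        TensorProduct.map Δ LinearMap.id ∘ₗ Δ = TensorProduct.map LinearMap.id Δ ∘ₗ Δ)
    (hcounitl : ∀ b : B,
      TensorProduct.lid k B (TensorProduct.map εB.toLinearMap LinearMap.id (Δ b)) = b)
    (hcounitr : ∀ b : B,
      TensorProduct.rid k B (TensorProduct.map LinearMap.id εB.toLinearMap (Δ b)) = b)
    {E : Type*} [Ring E] [Algebra k E] (Y1 Y2 : E) (l1 l2 l12 : k)
    (hY1 : Y1 ^ 2 = l1 • (1 : E)) (hY2 : Y2 ^ 2 = l2 • (1 : E))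
    (hY12 : x12 k q12 Y1 Y2 ^ 2 = l12 • (1 : E))
    (γ γ' : B →ₗ[k] E)
    (hγ0 : γ 1 = 1) (hγ1 : γ X1 = Y1) (hγ2 : γ X2 = Y2)
    (hγ3 : γ (x12 k q12 X1 X2) = x12 k q12 Y1 Y2)
    (hγ5 : γ (X2 * X1) = Y2 * Y1)
    (hγ4 : γ (x12 k q12 X1 X2 * X1) = x12 k q12 Y1 Y2 * Y1 - (2 * (-q12) * l1) • Y2)
    (hγ6 : γ (X2 * x12 k q12 X1 X2) = Y2 * x12 k q12 Y1 Y2)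
    (hγ7 : γ (X2 * x12 k q12 X1 X2 * X1) = Y2 * x12 k q12 Y1 Y2 * Y1)
    (hγ'0 : γ' 1 = 1) (hγ'1 : γ' X1 = -Y1) (hγ'2 : γ' X2 = -Y2)
    (hγ'3 : γ' (x12 k q12 X1 X2) = x12 k q12 Y1 Y2 + (2 * q12) • (Y2 * Y1))
    (hγ'5 : γ' (X2 * X1) = (-q12) • x12 k q12 Y1 Y2 - Y2 * Y1)
    (hγ'4 : γ' (x12 k q12 X1 X2 * X1) =
      -(x12 k q12 Y1 Y2 * Y1) + (2 * (-q12) * l1) • Y2)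
    (hγ'6 : γ' (X2 * x12 k q12 X1 X2) = -(Y2 * x12 k q12 Y1 Y2))
    (hγ'7 : γ' (X2 * x12 k q12 X1 X2 * X1) = Y2 * x12 k q12 Y1 Y2 * Y1 - l12 • (1 : E)) :
    (∀ b : B, LinearMap.mul' k E (TensorProduct.map γ γ' (Δ b)) = εB b • (1 : E)) ∧
    (∀ b : B, LinearMap.mul' k E (TensorProduct.map γ' γ (Δ b)) = εB b • (1 : E)) := by
  have e1 : Y1 * Y1 = l1 • (1:E) := by rw [← pow_two]; exact hY1
  have e2 : Y2 * Y2 = l2 • (1:E) := by rw [← pow_two]; exact hY2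
  have e1w : ∀ w : E, Y1 * (Y1 * w) = l1 • w := fun w => by
    rw [← mul_assoc, e1, smul_mul_assoc, one_mul]
  have e2w : ∀ w : E, Y2 * (Y2 * w) = l2 • w := fun w => by
    rw [← mul_assoc, e2, smul_mul_assoc, one_mul]
  have main : ∀ f g : B →ₗ[k] E,
      (∀ j, LinearMap.mul' k E (TensorProduct.map f g (Δ (bB j))) = εB (bB j) • (1:E)) →
      ∀ b : B, LinearMap.mul' k E (TensorProduct.map f g (Δ b)) = εB b • (1:E) := by
    intro f g h b
    have heq : (LinearMap.mul' k E ∘ₗ TensorProduct.map f g ∘ₗ Δ)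
        = (εB.toLinearMap).smulRight (1:E) := by
      apply bB.ext
      intro j
      simpa using h j
    simpa using LinearMap.congr_fun heq b
  rcases hq with rfl | rfl
  · have e4 : Y1 * (Y2 * (Y1 * Y2)) = (l12 + 2 * l1 * l2) • (1:E) - Y2 * (Y1 * (Y2 * Y1)) := by
      have h := hY12
      rw [x12, pow_two] at h
      rw [eq_sub_iff_add_eq, add_smul, ← h]
      simp only [mul_add, add_mul, mul_sub, sub_mul, neg_mul, mul_neg, smul_mul_assoc,
        mul_smul_comm, smul_smul, mul_assoc, mul_one, one_mul, e1, e2, e1w, e2w, smul_add,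
        smul_sub, smul_neg, neg_smul, one_smul, neg_neg]
      module
    refine ⟨main γ γ' ?_, main γ' γ ?_⟩
    · intro j
      rw [hbB]
      fin_cases j
      · show LinearMap.mul' k E (TensorProduct.map γ γ' (Δ ((1:B)))) = εB ((1:B)) • (1:E)
        rw [hΔ0]
        simp only [map_add, map_sub, map_neg, map_smul, TensorProduct.map_tmul,
          LinearMap.mul'_apply, hγ0, hγ1, hγ2, hγ3, hγ4, hγ5, hγ6, hγ7, hγ'0, hγ'1, hγ'2, hγ'3,
          hγ'4, hγ'5, hγ'6, hγ'7]
        simp only [x12, map_one, map_mul, map_sub, map_smul, hε1, hε2, mul_zero, zero_mul,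
          smul_zero, sub_zero, zero_smul, smul_eq_mul]
        simp only [mul_add, add_mul, mul_sub, sub_mul, neg_mul, mul_neg, smul_mul_assoc,
          mul_smul_comm, smul_smul, mul_assoc, mul_one, one_mul, e1, e2, e1w, e2w, smul_add,
          smul_sub, smul_neg, neg_smul, one_smul, neg_neg, e4]
        try module
      · show LinearMap.mul' k E (TensorProduct.map γ γ' (Δ (X1))) = εB (X1) • (1:E)
        rw [hΔ1]
        simp only [map_add, map_sub, map_neg, map_smul, TensorProduct.map_tmul,
          LinearMap.mul'_apply, hγ0, hγ1, hγ2, hγ3, hγ4, hγ5, hγ6, hγ7, hγ'0, hγ'1, hγ'2, hγ'3,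
          hγ'4, hγ'5, hγ'6, hγ'7]
        simp only [x12, map_one, map_mul, map_sub, map_smul, hε1, hε2, mul_zero, zero_mul,
          smul_zero, sub_zero, zero_smul, smul_eq_mul]
        simp only [mul_add, add_mul, mul_sub, sub_mul, neg_mul, mul_neg, smul_mul_assoc,
          mul_smul_comm, smul_smul, mul_assoc, mul_one, one_mul, e1, e2, e1w, e2w, smul_add,
          smul_sub, smul_neg, neg_smul, one_smul, neg_neg, e4]
        try module
      · show LinearMap.mul' k E (TensorProduct.map γ γ' (Δ (X2))) = εB (X2) • (1:E)
        rw [hΔ2]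
        simp only [map_add, map_sub, map_neg, map_smul, TensorProduct.map_tmul,
          LinearMap.mul'_apply, hγ0, hγ1, hγ2, hγ3, hγ4, hγ5, hγ6, hγ7, hγ'0, hγ'1, hγ'2, hγ'3,
          hγ'4, hγ'5, hγ'6, hγ'7]
        simp only [x12, map_one, map_mul, map_sub, map_smul, hε1, hε2, mul_zero, zero_mul,
          smul_zero, sub_zero, zero_smul, smul_eq_mul]
        simp only [mul_add, add_mul, mul_sub, sub_mul, neg_mul, mul_neg, smul_mul_assoc,
          mul_smul_comm, smul_smul, mul_assoc, mul_one, one_mul, e1, e2, e1w, e2w, smul_add,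
          smul_sub, smul_neg, neg_smul, one_smul, neg_neg, e4]
        try module
      · show LinearMap.mul' k E (TensorProduct.map γ γ' (Δ (x12 k (1:k) X1 X2))) = εB (x12 k (1:k) X1 X2) • (1:E)
        rw [hΔ3]
        simp only [map_add, map_sub, map_neg, map_smul, TensorProduct.map_tmul,
          LinearMap.mul'_apply, hγ0, hγ1, hγ2, hγ3, hγ4, hγ5, hγ6, hγ7, hγ'0, hγ'1, hγ'2, hγ'3,
          hγ'4, hγ'5, hγ'6, hγ'7]
        simp only [x12, map_one, map_mul, map_sub, map_smul, hε1, hε2, mul_zero, zero_mul,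
          smul_zero, sub_zero, zero_smul, smul_eq_mul]
        simp only [mul_add, add_mul, mul_sub, sub_mul, neg_mul, mul_neg, smul_mul_assoc,
          mul_smul_comm, smul_smul, mul_assoc, mul_one, one_mul, e1, e2, e1w, e2w, smul_add,
          smul_sub, smul_neg, neg_smul, one_smul, neg_neg, e4]
        try module
      · show LinearMap.mul' k E (TensorProduct.map γ γ' (Δ (x12 k (1:k) X1 X2 * X1))) = εB (x12 k (1:k) X1 X2 * X1) • (1:E)
        rw [hΔ4]
        simp only [map_add, map_sub, map_neg, map_smul, TensorProduct.map_tmul,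
          LinearMap.mul'_apply, hγ0, hγ1, hγ2, hγ3, hγ4, hγ5, hγ6, hγ7, hγ'0, hγ'1, hγ'2, hγ'3,
          hγ'4, hγ'5, hγ'6, hγ'7]
        simp only [x12, map_one, map_mul, map_sub, map_smul, hε1, hε2, mul_zero, zero_mul,
          smul_zero, sub_zero, zero_smul, smul_eq_mul]
        simp only [mul_add, add_mul, mul_sub, sub_mul, neg_mul, mul_neg, smul_mul_assoc,
          mul_smul_comm, smul_smul, mul_assoc, mul_one, one_mul, e1, e2, e1w, e2w, smul_add,
          smul_sub, smul_neg, neg_smul, one_smul, neg_neg, e4]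
        try module
      · show LinearMap.mul' k E (TensorProduct.map γ γ' (Δ (X2 * X1))) = εB (X2 * X1) • (1:E)
        rw [hΔ5]
        simp only [map_add, map_sub, map_neg, map_smul, TensorProduct.map_tmul,
          LinearMap.mul'_apply, hγ0, hγ1, hγ2, hγ3, hγ4, hγ5, hγ6, hγ7, hγ'0, hγ'1, hγ'2, hγ'3,
          hγ'4, hγ'5, hγ'6, hγ'7]
        simp only [x12, map_one, map_mul, map_sub, map_smul, hε1, hε2, mul_zero, zero_mul,
          smul_zero, sub_zero, zero_smul, smul_eq_mul]
        simp only [mul_add, add_mul, mul_sub, sub_mul, neg_mul, mul_neg, smul_mul_assoc,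
          mul_smul_comm, smul_smul, mul_assoc, mul_one, one_mul, e1, e2, e1w, e2w, smul_add,
          smul_sub, smul_neg, neg_smul, one_smul, neg_neg, e4]
        try module
      · show LinearMap.mul' k E (TensorProduct.map γ γ' (Δ (X2 * x12 k (1:k) X1 X2))) = εB (X2 * x12 k (1:k) X1 X2) • (1:E)
        rw [hΔ6]
        simp only [map_add, map_sub, map_neg, map_smul, TensorProduct.map_tmul,
          LinearMap.mul'_apply, hγ0, hγ1, hγ2, hγ3, hγ4, hγ5, hγ6, hγ7, hγ'0, hγ'1, hγ'2, hγ'3,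
          hγ'4, hγ'5, hγ'6, hγ'7]
        simp only [x12, map_one, map_mul, map_sub, map_smul, hε1, hε2, mul_zero, zero_mul,
          smul_zero, sub_zero, zero_smul, smul_eq_mul]
        simp only [mul_add, add_mul, mul_sub, sub_mul, neg_mul, mul_neg, smul_mul_assoc,
          mul_smul_comm, smul_smul, mul_assoc, mul_one, one_mul, e1, e2, e1w, e2w, smul_add,
          smul_sub, smul_neg, neg_smul, one_smul, neg_neg, e4]
        try module
      · show LinearMap.mul' k E (TensorProduct.map γ γ' (Δ (X2 * x12 k (1:k) X1 X2 * X1))) = εB (X2 * x12 k (1:k) X1 X2 * X1) • (1:E)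
        rw [hΔ7]
        simp only [map_add, map_sub, map_neg, map_smul, TensorProduct.map_tmul,
          LinearMap.mul'_apply, hγ0, hγ1, hγ2, hγ3, hγ4, hγ5, hγ6, hγ7, hγ'0, hγ'1, hγ'2, hγ'3,
          hγ'4, hγ'5, hγ'6, hγ'7]
        simp only [x12, map_one, map_mul, map_sub, map_smul, hε1, hε2, mul_zero, zero_mul,
          smul_zero, sub_zero, zero_smul, smul_eq_mul]
        simp only [mul_add, add_mul, mul_sub, sub_mul, neg_mul, mul_neg, smul_mul_assoc,
          mul_smul_comm, smul_smul, mul_assoc, mul_one, one_mul, e1, e2, e1w, e2w, smul_add,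
          smul_sub, smul_neg, neg_smul, one_smul, neg_neg, e4]
        try module
    · intro j
      rw [hbB]
      fin_cases j
      · show LinearMap.mul' k E (TensorProduct.map γ' γ (Δ ((1:B)))) = εB ((1:B)) • (1:E)
        rw [hΔ0]
        simp only [map_add, map_sub, map_neg, map_smul, TensorProduct.map_tmul,
          LinearMap.mul'_apply, hγ0, hγ1, hγ2, hγ3, hγ4, hγ5, hγ6, hγ7, hγ'0, hγ'1, hγ'2, hγ'3,
          hγ'4, hγ'5, hγ'6, hγ'7]
        simp only [x12, map_one, map_mul, map_sub, map_smul, hε1, hε2, mul_zero, zero_mul,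
          smul_zero, sub_zero, zero_smul, smul_eq_mul]
        simp only [mul_add, add_mul, mul_sub, sub_mul, neg_mul, mul_neg, smul_mul_assoc,
          mul_smul_comm, smul_smul, mul_assoc, mul_one, one_mul, e1, e2, e1w, e2w, smul_add,
          smul_sub, smul_neg, neg_smul, one_smul, neg_neg, e4]
        try module
      · show LinearMap.mul' k E (TensorProduct.map γ' γ (Δ (X1))) = εB (X1) • (1:E)
        rw [hΔ1]
        simp only [map_add, map_sub, map_neg, map_smul, TensorProduct.map_tmul,
          LinearMap.mul'_apply, hγ0, hγ1, hγ2, hγ3, hγ4, hγ5, hγ6, hγ7, hγ'0, hγ'1, hγ'2, hγ'3,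
          hγ'4, hγ'5, hγ'6, hγ'7]
        simp only [x12, map_one, map_mul, map_sub, map_smul, hε1, hε2, mul_zero, zero_mul,
          smul_zero, sub_zero, zero_smul, smul_eq_mul]
        simp only [mul_add, add_mul, mul_sub, sub_mul, neg_mul, mul_neg, smul_mul_assoc,
          mul_smul_comm, smul_smul, mul_assoc, mul_one, one_mul, e1, e2, e1w, e2w, smul_add,
          smul_sub, smul_neg, neg_smul, one_smul, neg_neg, e4]
        try module
      · show LinearMap.mul' k E (TensorProduct.map γ' γ (Δ (X2))) = εB (X2) • (1:E)
        rw [hΔ2]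
        simp only [map_add, map_sub, map_neg, map_smul, TensorProduct.map_tmul,
          LinearMap.mul'_apply, hγ0, hγ1, hγ2, hγ3, hγ4, hγ5, hγ6, hγ7, hγ'0, hγ'1, hγ'2, hγ'3,
          hγ'4, hγ'5, hγ'6, hγ'7]
        simp only [x12, map_one, map_mul, map_sub, map_smul, hε1, hε2, mul_zero, zero_mul,
          smul_zero, sub_zero, zero_smul, smul_eq_mul]
        simp only [mul_add, add_mul, mul_sub, sub_mul, neg_mul, mul_neg, smul_mul_assoc,
          mul_smul_comm, smul_smul, mul_assoc, mul_one, one_mul, e1, e2, e1w, e2w, smul_add,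
          smul_sub, smul_neg, neg_smul, one_smul, neg_neg, e4]
        try module
      · show LinearMap.mul' k E (TensorProduct.map γ' γ (Δ (x12 k (1:k) X1 X2))) = εB (x12 k (1:k) X1 X2) • (1:E)
        rw [hΔ3]
        simp only [map_add, map_sub, map_neg, map_smul, TensorProduct.map_tmul,
          LinearMap.mul'_apply, hγ0, hγ1, hγ2, hγ3, hγ4, hγ5, hγ6, hγ7, hγ'0, hγ'1, hγ'2, hγ'3,
          hγ'4, hγ'5, hγ'6, hγ'7]
        simp only [x12, map_one, map_mul, map_sub, map_smul, hε1, hε2, mul_zero, zero_mul,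
          smul_zero, sub_zero, zero_smul, smul_eq_mul]
        simp only [mul_add, add_mul, mul_sub, sub_mul, neg_mul, mul_neg, smul_mul_assoc,
          mul_smul_comm, smul_smul, mul_assoc, mul_one, one_mul, e1, e2, e1w, e2w, smul_add,
          smul_sub, smul_neg, neg_smul, one_smul, neg_neg, e4]
        try module
      · show LinearMap.mul' k E (TensorProduct.map γ' γ (Δ (x12 k (1:k) X1 X2 * X1))) = εB (x12 k (1:k) X1 X2 * X1) • (1:E)
        rw [hΔ4]
        simp only [map_add, map_sub, map_neg, map_smul, TensorProduct.map_tmul,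
          LinearMap.mul'_apply, hγ0, hγ1, hγ2, hγ3, hγ4, hγ5, hγ6, hγ7, hγ'0, hγ'1, hγ'2, hγ'3,
          hγ'4, hγ'5, hγ'6, hγ'7]
        simp only [x12, map_one, map_mul, map_sub, map_smul, hε1, hε2, mul_zero, zero_mul,
          smul_zero, sub_zero, zero_smul, smul_eq_mul]
        simp only [mul_add, add_mul, mul_sub, sub_mul, neg_mul, mul_neg, smul_mul_assoc,
          mul_smul_comm, smul_smul, mul_assoc, mul_one, one_mul, e1, e2, e1w, e2w, smul_add,
          smul_sub, smul_neg, neg_smul, one_smul, neg_neg, e4]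
        try module
      · show LinearMap.mul' k E (TensorProduct.map γ' γ (Δ (X2 * X1))) = εB (X2 * X1) • (1:E)
        rw [hΔ5]
        simp only [map_add, map_sub, map_neg, map_smul, TensorProduct.map_tmul,
          LinearMap.mul'_apply, hγ0, hγ1, hγ2, hγ3, hγ4, hγ5, hγ6, hγ7, hγ'0, hγ'1, hγ'2, hγ'3,
          hγ'4, hγ'5, hγ'6, hγ'7]
        simp only [x12, map_one, map_mul, map_sub, map_smul, hε1, hε2, mul_zero, zero_mul,
          smul_zero, sub_zero, zero_smul, smul_eq_mul]
        simp only [mul_add, add_mul, mul_sub, sub_mul, neg_mul, mul_neg, smul_mul_assoc,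
          mul_smul_comm, smul_smul, mul_assoc, mul_one, one_mul, e1, e2, e1w, e2w, smul_add,
          smul_sub, smul_neg, neg_smul, one_smul, neg_neg, e4]
        try module
      · show LinearMap.mul' k E (TensorProduct.map γ' γ (Δ (X2 * x12 k (1:k) X1 X2))) = εB (X2 * x12 k (1:k) X1 X2) • (1:E)
        rw [hΔ6]
        simp only [map_add, map_sub, map_neg, map_smul, TensorProduct.map_tmul,
          LinearMap.mul'_apply, hγ0, hγ1, hγ2, hγ3, hγ4, hγ5, hγ6, hγ7, hγ'0, hγ'1, hγ'2, hγ'3,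
          hγ'4, hγ'5, hγ'6, hγ'7]
        simp only [x12, map_one, map_mul, map_sub, map_smul, hε1, hε2, mul_zero, zero_mul,
          smul_zero, sub_zero, zero_smul, smul_eq_mul]
        simp only [mul_add, add_mul, mul_sub, sub_mul, neg_mul, mul_neg, smul_mul_assoc,
          mul_smul_comm, smul_smul, mul_assoc, mul_one, one_mul, e1, e2, e1w, e2w, smul_add,
          smul_sub, smul_neg, neg_smul, one_smul, neg_neg, e4]
        try module
      · show LinearMap.mul' k E (TensorProduct.map γ' γ (Δ (X2 * x12 k (1:k) X1 X2 * X1))) = εB (X2 * x12 k (1:k) X1 X2 * X1) • (1:E)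
        rw [hΔ7]
        simp only [map_add, map_sub, map_neg, map_smul, TensorProduct.map_tmul,
          LinearMap.mul'_apply, hγ0, hγ1, hγ2, hγ3, hγ4, hγ5, hγ6, hγ7, hγ'0, hγ'1, hγ'2, hγ'3,
          hγ'4, hγ'5, hγ'6, hγ'7]
        simp only [x12, map_one, map_mul, map_sub, map_smul, hε1, hε2, mul_zero, zero_mul,
          smul_zero, sub_zero, zero_smul, smul_eq_mul]
        simp only [mul_add, add_mul, mul_sub, sub_mul, neg_mul, mul_neg, smul_mul_assoc,
          mul_smul_comm, smul_smul, mul_assoc, mul_one, one_mul, e1, e2, e1w, e2w, smul_add,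
          smul_sub, smul_neg, neg_smul, one_smul, neg_neg, e4]
        try module
  · have e4 : Y1 * (Y2 * (Y1 * Y2)) = (l12 - 2 * l1 * l2) • (1:E) - Y2 * (Y1 * (Y2 * Y1)) := by
      have h := hY12
      rw [x12, pow_two] at h
      rw [eq_sub_iff_add_eq, sub_smul, ← h]
      simp only [mul_add, add_mul, mul_sub, sub_mul, neg_mul, mul_neg, smul_mul_assoc,
        mul_smul_comm, smul_smul, mul_assoc, mul_one, one_mul, e1, e2, e1w, e2w, smul_add,
        smul_sub, smul_neg, neg_smul, one_smul, neg_neg]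
      module
    refine ⟨main γ γ' ?_, main γ' γ ?_⟩
    · intro j
      rw [hbB]
      fin_cases j
      · show LinearMap.mul' k E (TensorProduct.map γ γ' (Δ ((1:B)))) = εB ((1:B)) • (1:E)
        rw [hΔ0]
        simp only [map_add, map_sub, map_neg, map_smul, TensorProduct.map_tmul,
          LinearMap.mul'_apply, hγ0, hγ1, hγ2, hγ3, hγ4, hγ5, hγ6, hγ7, hγ'0, hγ'1, hγ'2, hγ'3,
          hγ'4, hγ'5, hγ'6, hγ'7]
        simp only [x12, map_one, map_mul, map_sub, map_smul, hε1, hε2, mul_zero, zero_mul,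
          smul_zero, sub_zero, zero_smul, smul_eq_mul]
        simp only [mul_add, add_mul, mul_sub, sub_mul, neg_mul, mul_neg, smul_mul_assoc,
          mul_smul_comm, smul_smul, mul_assoc, mul_one, one_mul, e1, e2, e1w, e2w, smul_add,
          smul_sub, smul_neg, neg_smul, one_smul, neg_neg, e4]
        try module
      · show LinearMap.mul' k E (TensorProduct.map γ γ' (Δ (X1))) = εB (X1) • (1:E)
        rw [hΔ1]
        simp only [map_add, map_sub, map_neg, map_smul, TensorProduct.map_tmul,
          LinearMap.mul'_apply, hγ0, hγ1, hγ2, hγ3, hγ4, hγ5, hγ6, hγ7, hγ'0, hγ'1, hγ'2, hγ'3,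
          hγ'4, hγ'5, hγ'6, hγ'7]
        simp only [x12, map_one, map_mul, map_sub, map_smul, hε1, hε2, mul_zero, zero_mul,
          smul_zero, sub_zero, zero_smul, smul_eq_mul]
        simp only [mul_add, add_mul, mul_sub, sub_mul, neg_mul, mul_neg, smul_mul_assoc,
          mul_smul_comm, smul_smul, mul_assoc, mul_one, one_mul, e1, e2, e1w, e2w, smul_add,
          smul_sub, smul_neg, neg_smul, one_smul, neg_neg, e4]
        try module
      · show LinearMap.mul' k E (TensorProduct.map γ γ' (Δ (X2))) = εB (X2) • (1:E)
        rw [hΔ2]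
        simp only [map_add, map_sub, map_neg, map_smul, TensorProduct.map_tmul,
          LinearMap.mul'_apply, hγ0, hγ1, hγ2, hγ3, hγ4, hγ5, hγ6, hγ7, hγ'0, hγ'1, hγ'2, hγ'3,
          hγ'4, hγ'5, hγ'6, hγ'7]
        simp only [x12, map_one, map_mul, map_sub, map_smul, hε1, hε2, mul_zero, zero_mul,
          smul_zero, sub_zero, zero_smul, smul_eq_mul]
        simp only [mul_add, add_mul, mul_sub, sub_mul, neg_mul, mul_neg, smul_mul_assoc,
          mul_smul_comm, smul_smul, mul_assoc, mul_one, one_mul, e1, e2, e1w, e2w, smul_add,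
          smul_sub, smul_neg, neg_smul, one_smul, neg_neg, e4]
        try module
      · show LinearMap.mul' k E (TensorProduct.map γ γ' (Δ (x12 k (-1:k) X1 X2))) = εB (x12 k (-1:k) X1 X2) • (1:E)
        rw [hΔ3]
        simp only [map_add, map_sub, map_neg, map_smul, TensorProduct.map_tmul,
          LinearMap.mul'_apply, hγ0, hγ1, hγ2, hγ3, hγ4, hγ5, hγ6, hγ7, hγ'0, hγ'1, hγ'2, hγ'3,
          hγ'4, hγ'5, hγ'6, hγ'7]
        simp only [x12, map_one, map_mul, map_sub, map_smul, hε1, hε2, mul_zero, zero_mul,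
          smul_zero, sub_zero, zero_smul, smul_eq_mul]
        simp only [mul_add, add_mul, mul_sub, sub_mul, neg_mul, mul_neg, smul_mul_assoc,
          mul_smul_comm, smul_smul, mul_assoc, mul_one, one_mul, e1, e2, e1w, e2w, smul_add,
          smul_sub, smul_neg, neg_smul, one_smul, neg_neg, e4]
        try module
      · show LinearMap.mul' k E (TensorProduct.map γ γ' (Δ (x12 k (-1:k) X1 X2 * X1))) = εB (x12 k (-1:k) X1 X2 * X1) • (1:E)
        rw [hΔ4]
        simp only [map_add, map_sub, map_neg, map_smul, TensorProduct.map_tmul,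
          LinearMap.mul'_apply, hγ0, hγ1, hγ2, hγ3, hγ4, hγ5, hγ6, hγ7, hγ'0, hγ'1, hγ'2, hγ'3,
          hγ'4, hγ'5, hγ'6, hγ'7]
        simp only [x12, map_one, map_mul, map_sub, map_smul, hε1, hε2, mul_zero, zero_mul,
          smul_zero, sub_zero, zero_smul, smul_eq_mul]
        simp only [mul_add, add_mul, mul_sub, sub_mul, neg_mul, mul_neg, smul_mul_assoc,
          mul_smul_comm, smul_smul, mul_assoc, mul_one, one_mul, e1, e2, e1w, e2w, smul_add,
          smul_sub, smul_neg, neg_smul, one_smul, neg_neg, e4]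
        try module
      · show LinearMap.mul' k E (TensorProduct.map γ γ' (Δ (X2 * X1))) = εB (X2 * X1) • (1:E)
        rw [hΔ5]
        simp only [map_add, map_sub, map_neg, map_smul, TensorProduct.map_tmul,
          LinearMap.mul'_apply, hγ0, hγ1, hγ2, hγ3, hγ4, hγ5, hγ6, hγ7, hγ'0, hγ'1, hγ'2, hγ'3,
          hγ'4, hγ'5, hγ'6, hγ'7]
        simp only [x12, map_one, map_mul, map_sub, map_smul, hε1, hε2, mul_zero, zero_mul,
          smul_zero, sub_zero, zero_smul, smul_eq_mul]
        simp only [mul_add, add_mul, mul_sub, sub_mul, neg_mul, mul_neg, smul_mul_assoc,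
          mul_smul_comm, smul_smul, mul_assoc, mul_one, one_mul, e1, e2, e1w, e2w, smul_add,
          smul_sub, smul_neg, neg_smul, one_smul, neg_neg, e4]
        try module
      · show LinearMap.mul' k E (TensorProduct.map γ γ' (Δ (X2 * x12 k (-1:k) X1 X2))) = εB (X2 * x12 k (-1:k) X1 X2) • (1:E)
        rw [hΔ6]
        simp only [map_add, map_sub, map_neg, map_smul, TensorProduct.map_tmul,
          LinearMap.mul'_apply, hγ0, hγ1, hγ2, hγ3, hγ4, hγ5, hγ6, hγ7, hγ'0, hγ'1, hγ'2, hγ'3,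
          hγ'4, hγ'5, hγ'6, hγ'7]
        simp only [x12, map_one, map_mul, map_sub, map_smul, hε1, hε2, mul_zero, zero_mul,
          smul_zero, sub_zero, zero_smul, smul_eq_mul]
        simp only [mul_add, add_mul, mul_sub, sub_mul, neg_mul, mul_neg, smul_mul_assoc,
          mul_smul_comm, smul_smul, mul_assoc, mul_one, one_mul, e1, e2, e1w, e2w, smul_add,
          smul_sub, smul_neg, neg_smul, one_smul, neg_neg, e4]
        try module
      · show LinearMap.mul' k E (TensorProduct.map γ γ' (Δ (X2 * x12 k (-1:k) X1 X2 * X1))) = εB (X2 * x12 k (-1:k) X1 X2 * X1) • (1:E)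
        rw [hΔ7]
        simp only [map_add, map_sub, map_neg, map_smul, TensorProduct.map_tmul,
          LinearMap.mul'_apply, hγ0, hγ1, hγ2, hγ3, hγ4, hγ5, hγ6, hγ7, hγ'0, hγ'1, hγ'2, hγ'3,
          hγ'4, hγ'5, hγ'6, hγ'7]
        simp only [x12, map_one, map_mul, map_sub, map_smul, hε1, hε2, mul_zero, zero_mul,
          smul_zero, sub_zero, zero_smul, smul_eq_mul]
        simp only [mul_add, add_mul, mul_sub, sub_mul, neg_mul, mul_neg, smul_mul_assoc,
          mul_smul_comm, smul_smul, mul_assoc, mul_one, one_mul, e1, e2, e1w, e2w, smul_add,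
          smul_sub, smul_neg, neg_smul, one_smul, neg_neg, e4]
        try module
    · intro j
      rw [hbB]
      fin_cases j
      · show LinearMap.mul' k E (TensorProduct.map γ' γ (Δ ((1:B)))) = εB ((1:B)) • (1:E)
        rw [hΔ0]
        simp only [map_add, map_sub, map_neg, map_smul, TensorProduct.map_tmul,
          LinearMap.mul'_apply, hγ0, hγ1, hγ2, hγ3, hγ4, hγ5, hγ6, hγ7, hγ'0, hγ'1, hγ'2, hγ'3,
          hγ'4, hγ'5, hγ'6, hγ'7]
        simp only [x12, map_one, map_mul, map_sub, map_smul, hε1, hε2, mul_zero, zero_mul,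
          smul_zero, sub_zero, zero_smul, smul_eq_mul]
        simp only [mul_add, add_mul, mul_sub, sub_mul, neg_mul, mul_neg, smul_mul_assoc,
          mul_smul_comm, smul_smul, mul_assoc, mul_one, one_mul, e1, e2, e1w, e2w, smul_add,
          smul_sub, smul_neg, neg_smul, one_smul, neg_neg, e4]
        try module
      · show LinearMap.mul' k E (TensorProduct.map γ' γ (Δ (X1))) = εB (X1) • (1:E)
        rw [hΔ1]
        simp only [map_add, map_sub, map_neg, map_smul, TensorProduct.map_tmul,
          LinearMap.mul'_apply, hγ0, hγ1, hγ2, hγ3, hγ4, hγ5, hγ6, hγ7, hγ'0, hγ'1, hγ'2, hγ'3,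
          hγ'4, hγ'5, hγ'6, hγ'7]
        simp only [x12, map_one, map_mul, map_sub, map_smul, hε1, hε2, mul_zero, zero_mul,
          smul_zero, sub_zero, zero_smul, smul_eq_mul]
        simp only [mul_add, add_mul, mul_sub, sub_mul, neg_mul, mul_neg, smul_mul_assoc,
          mul_smul_comm, smul_smul, mul_assoc, mul_one, one_mul, e1, e2, e1w, e2w, smul_add,
          smul_sub, smul_neg, neg_smul, one_smul, neg_neg, e4]
        try module
      · show LinearMap.mul' k E (TensorProduct.map γ' γ (Δ (X2))) = εB (X2) • (1:E)
        rw [hΔ2]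
        simp only [map_add, map_sub, map_neg, map_smul, TensorProduct.map_tmul,
          LinearMap.mul'_apply, hγ0, hγ1, hγ2, hγ3, hγ4, hγ5, hγ6, hγ7, hγ'0, hγ'1, hγ'2, hγ'3,
          hγ'4, hγ'5, hγ'6, hγ'7]
        simp only [x12, map_one, map_mul, map_sub, map_smul, hε1, hε2, mul_zero, zero_mul,
          smul_zero, sub_zero, zero_smul, smul_eq_mul]
        simp only [mul_add, add_mul, mul_sub, sub_mul, neg_mul, mul_neg, smul_mul_assoc,
          mul_smul_comm, smul_smul, mul_assoc, mul_one, one_mul, e1, e2, e1w, e2w, smul_add,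
          smul_sub, smul_neg, neg_smul, one_smul, neg_neg, e4]
        try module
      · show LinearMap.mul' k E (TensorProduct.map γ' γ (Δ (x12 k (-1:k) X1 X2))) = εB (x12 k (-1:k) X1 X2) • (1:E)
        rw [hΔ3]
        simp only [map_add, map_sub, map_neg, map_smul, TensorProduct.map_tmul,
          LinearMap.mul'_apply, hγ0, hγ1, hγ2, hγ3, hγ4, hγ5, hγ6, hγ7, hγ'0, hγ'1, hγ'2, hγ'3,
          hγ'4, hγ'5, hγ'6, hγ'7]
        simp only [x12, map_one, map_mul, map_sub, map_smul, hε1, hε2, mul_zero, zero_mul,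
          smul_zero, sub_zero, zero_smul, smul_eq_mul]
        simp only [mul_add, add_mul, mul_sub, sub_mul, neg_mul, mul_neg, smul_mul_assoc,
          mul_smul_comm, smul_smul, mul_assoc, mul_one, one_mul, e1, e2, e1w, e2w, smul_add,
          smul_sub, smul_neg, neg_smul, one_smul, neg_neg, e4]
        try module
      · show LinearMap.mul' k E (TensorProduct.map γ' γ (Δ (x12 k (-1:k) X1 X2 * X1))) = εB (x12 k (-1:k) X1 X2 * X1) • (1:E)
        rw [hΔ4]
        simp only [map_add, map_sub, map_neg, map_smul, TensorProduct.map_tmul,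
          LinearMap.mul'_apply, hγ0, hγ1, hγ2, hγ3, hγ4, hγ5, hγ6, hγ7, hγ'0, hγ'1, hγ'2, hγ'3,
          hγ'4, hγ'5, hγ'6, hγ'7]
        simp only [x12, map_one, map_mul, map_sub, map_smul, hε1, hε2, mul_zero, zero_mul,
          smul_zero, sub_zero, zero_smul, smul_eq_mul]
        simp only [mul_add, add_mul, mul_sub, sub_mul, neg_mul, mul_neg, smul_mul_assoc,
          mul_smul_comm, smul_smul, mul_assoc, mul_one, one_mul, e1, e2, e1w, e2w, smul_add,
          smul_sub, smul_neg, neg_smul, one_smul, neg_neg, e4]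
        try module
      · show LinearMap.mul' k E (TensorProduct.map γ' γ (Δ (X2 * X1))) = εB (X2 * X1) • (1:E)
        rw [hΔ5]
        simp only [map_add, map_sub, map_neg, map_smul, TensorProduct.map_tmul,
          LinearMap.mul'_apply, hγ0, hγ1, hγ2, hγ3, hγ4, hγ5, hγ6, hγ7, hγ'0, hγ'1, hγ'2, hγ'3,
          hγ'4, hγ'5, hγ'6, hγ'7]
        simp only [x12, map_one, map_mul, map_sub, map_smul, hε1, hε2, mul_zero, zero_mul,
          smul_zero, sub_zero, zero_smul, smul_eq_mul]
        simp only [mul_add, add_mul, mul_sub, sub_mul, neg_mul, mul_neg, smul_mul_assoc,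
          mul_smul_comm, smul_smul, mul_assoc, mul_one, one_mul, e1, e2, e1w, e2w, smul_add,
          smul_sub, smul_neg, neg_smul, one_smul, neg_neg, e4]
        try module
      · show LinearMap.mul' k E (TensorProduct.map γ' γ (Δ (X2 * x12 k (-1:k) X1 X2))) = εB (X2 * x12 k (-1:k) X1 X2) • (1:E)
        rw [hΔ6]
        simp only [map_add, map_sub, map_neg, map_smul, TensorProduct.map_tmul,
          LinearMap.mul'_apply, hγ0, hγ1, hγ2, hγ3, hγ4, hγ5, hγ6, hγ7, hγ'0, hγ'1, hγ'2, hγ'3,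
          hγ'4, hγ'5, hγ'6, hγ'7]
        simp only [x12, map_one, map_mul, map_sub, map_smul, hε1, hε2, mul_zero, zero_mul,
          smul_zero, sub_zero, zero_smul, smul_eq_mul]
        simp only [mul_add, add_mul, mul_sub, sub_mul, neg_mul, mul_neg, smul_mul_assoc,
          mul_smul_comm, smul_smul, mul_assoc, mul_one, one_mul, e1, e2, e1w, e2w, smul_add,
          smul_sub, smul_neg, neg_smul, one_smul, neg_neg, e4]
        try module
      · show LinearMap.mul' k E (TensorProduct.map γ' γ (Δ (X2 * x12 k (-1:k) X1 X2 * X1))) = εB (X2 * x12 k (-1:k) X1 X2 * X1) • (1:E)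
        rw [hΔ7]
        simp only [map_add, map_sub, map_neg, map_smul, TensorProduct.map_tmul,
          LinearMap.mul'_apply, hγ0, hγ1, hγ2, hγ3, hγ4, hγ5, hγ6, hγ7, hγ'0, hγ'1, hγ'2, hγ'3,
          hγ'4, hγ'5, hγ'6, hγ'7]
        simp only [x12, map_one, map_mul, map_sub, map_smul, hε1, hε2, mul_zero, zero_mul,
          smul_zero, sub_zero, zero_smul, smul_eq_mul]
        simp only [mul_add, add_mul, mul_sub, sub_mul, neg_mul, mul_neg, smul_mul_assoc,
          mul_smul_comm, smul_smul, mul_assoc, mul_one, one_mul, e1, e2, e1w, e2w, smul_add,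
          smul_sub, smul_neg, neg_smul, one_smul, neg_neg, e4]
        try module

end PaperA2
end
end

section
/- Let sigma : A (x) A -> k be a linear map with sigma(iota(h) (x) iota(h')) = eps(h)*eps(h') for all h, h' in H, and let alpha : A -> k be convolution invertible such that (alpha -> sigma)(iota(h) (x) iota(h')) = eps(h)*eps(h') for all h, h' in H. Then alpha o iota : H -> k is an algebra homomorphism: alpha(1) = 1 and alpha(iota(h)*iota(h')) = alpha(iota(h))*alpha(iota(h')) for all h, h' in H. -/
/-!
Common framework: convolution algebras, Hopf 2-cocycles, the Nichols algebra `B` of Cartan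
type `A₂` with `q = -1`, its bosonization `A = B # H`, bilinear forms on `B` and their
extensions to `A ⊗ A`, following García–Sánchez, "Hopf cocycles associated to pointed and
copointed deformations over S₃" (arXiv:2108.11432).
-/

open scoped TensorProduct
open TensorProduct

noncomputable section

namespace PaperA2

section Aux

open TensorProduct LinearMap Coalgebra

variable {k : Type*} [Field k]

/-- Naturality of `tensorTensorTensorComm`. -/
lemma ttt_natural {M₁ M₂ M₃ M₄ N₁ N₂ N₃ N₄ : Type*}
    [AddCommMonoid M₁] [AddCommMonoid M₂] [AddCommMonoid M₃] [AddCommMonoid M₄]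
    [AddCommMonoid N₁] [AddCommMonoid N₂] [AddCommMonoid N₃] [AddCommMonoid N₄]
    [Module k M₁] [Module k M₂] [Module k M₃] [Module k M₄]
    [Module k N₁] [Module k N₂] [Module k N₃] [Module k N₄]
    (f₁ : M₁ →ₗ[k] N₁) (f₂ : M₂ →ₗ[k] N₂) (f₃ : M₃ →ₗ[k] N₃) (f₄ : M₄ →ₗ[k] N₄) :
    (tensorTensorTensorComm k N₁ N₂ N₃ N₄).toLinearMap ∘ₗ
        TensorProduct.map (TensorProduct.map f₁ f₂) (TensorProduct.map f₃ f₄)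
      = TensorProduct.map (TensorProduct.map f₁ f₃) (TensorProduct.map f₂ f₄) ∘ₗ
        (tensorTensorTensorComm k M₁ M₂ M₃ M₄).toLinearMap := by
  apply TensorProduct.ext_fourfold'
  intro a b c d
  simp

section TensorCoalg

variable {C D : Type*} [AddCommMonoid C] [AddCommMonoid D] [Module k C] [Module k D]
  [Coalgebra k C] [Coalgebra k D]

/-- The shuffle `(C ⊗ (C ⊗ C)) ⊗ (D ⊗ (D ⊗ D)) → (C ⊗ D) ⊗ ((C ⊗ D) ⊗ (C ⊗ D))`. -/
noncomputable def shufflePhi :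
    (C ⊗[k] (C ⊗[k] C)) ⊗[k] (D ⊗[k] (D ⊗[k] D)) →ₗ[k]
      (C ⊗[k] D) ⊗[k] ((C ⊗[k] D) ⊗[k] (C ⊗[k] D)) :=
  LinearMap.lTensor (C ⊗[k] D) (tensorTensorTensorComm k C C D D).toLinearMap ∘ₗ
    (tensorTensorTensorComm k C (C ⊗[k] C) D (D ⊗[k] D)).toLinearMap

lemma tensor_coassoc :
    (TensorProduct.assoc k (C ⊗[k] D) (C ⊗[k] D) (C ⊗[k] D)).toLinearMap ∘ₗ
        (Coalgebra.comul (R := k) (A := C ⊗[k] D)).rTensor (C ⊗[k] D) ∘ₗ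
        Coalgebra.comul
      = (Coalgebra.comul (R := k) (A := C ⊗[k] D)).lTensor (C ⊗[k] D) ∘ₗ Coalgebra.comul := by
  have hA : LinearMap.lTensor (C ⊗[k] D) (Coalgebra.comul (R := k) (A := C ⊗[k] D)) ∘ₗ
        (tensorTensorTensorComm k C C D D).toLinearMap
      = shufflePhi ∘ₗ TensorProduct.map
          ((Coalgebra.comul (R := k) (A := C)).lTensor C)
          ((Coalgebra.comul (R := k) (A := D)).lTensor D) := by
    apply TensorProduct.ext_fourfold'
    intro a b c d
    simp [shufflePhi, TensorProduct.comul_tmul, TensorProduct.AlgebraTensorModule.tensorTensorTensorComm_eq]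
  have claim : ∀ (u : C ⊗[k] C) (v : D ⊗[k] D) (b : C) (d : D),
      (TensorProduct.assoc k (C ⊗[k] D) (C ⊗[k] D) (C ⊗[k] D))
          ((tensorTensorTensorComm k C C D D (u ⊗ₜ[k] v)) ⊗ₜ[k] (b ⊗ₜ[k] d))
        = shufflePhi ((TensorProduct.assoc k C C C (u ⊗ₜ[k] b)) ⊗ₜ[k]
            (TensorProduct.assoc k D D D (v ⊗ₜ[k] d))) := by
    intro u v b d
    induction u using TensorProduct.induction_on with
    | zero => simp
    | add x y hx hy =>
      simp only [add_tmul, map_add, LinearEquiv.map_add, LinearMap.map_add]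
      rw [hx, hy]
    | tmul a₁ a₂ =>
      induction v using TensorProduct.induction_on with
      | zero => simp
      | add x y hx hy =>
        simp only [add_tmul, tmul_add, map_add, LinearEquiv.map_add, LinearMap.map_add]
        rw [hx, hy]
      | tmul c₁ c₂ => simp [shufflePhi]
  have hB : (TensorProduct.assoc k (C ⊗[k] D) (C ⊗[k] D) (C ⊗[k] D)).toLinearMap ∘ₗ
        (Coalgebra.comul (R := k) (A := C ⊗[k] D)).rTensor (C ⊗[k] D) ∘ₗ
        (tensorTensorTensorComm k C C D D).toLinearMap
      = shufflePhi ∘ₗ TensorProduct.map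
          ((TensorProduct.assoc k C C C).toLinearMap ∘ₗ
            (Coalgebra.comul (R := k) (A := C)).rTensor C)
          ((TensorProduct.assoc k D D D).toLinearMap ∘ₗ
            (Coalgebra.comul (R := k) (A := D)).rTensor D) := by
    apply TensorProduct.ext_fourfold'
    intro a b c d
    have := claim (Coalgebra.comul (R := k) a) (Coalgebra.comul (R := k) c) b d
    simpa [TensorProduct.comul_tmul, TensorProduct.AlgebraTensorModule.tensorTensorTensorComm_eq] using this
  have hcomul : Coalgebra.comul (R := k) (A := C ⊗[k] D)
      = (tensorTensorTensorComm k C C D D).toLinearMap ∘ₗ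
          TensorProduct.map (Coalgebra.comul (R := k)) (Coalgebra.comul (R := k)) := rfl
  calc (TensorProduct.assoc k (C ⊗[k] D) (C ⊗[k] D) (C ⊗[k] D)).toLinearMap ∘ₗ
        (Coalgebra.comul (R := k) (A := C ⊗[k] D)).rTensor (C ⊗[k] D) ∘ₗ Coalgebra.comul
      = ((TensorProduct.assoc k (C ⊗[k] D) (C ⊗[k] D) (C ⊗[k] D)).toLinearMap ∘ₗ
          (Coalgebra.comul (R := k) (A := C ⊗[k] D)).rTensor (C ⊗[k] D) ∘ₗ
          (tensorTensorTensorComm k C C D D).toLinearMap) ∘ₗ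
          TensorProduct.map (Coalgebra.comul (R := k)) (Coalgebra.comul (R := k)) := by
        rw [hcomul]; simp only [LinearMap.comp_assoc]
    _ = shufflePhi ∘ₗ TensorProduct.map
          (((TensorProduct.assoc k C C C).toLinearMap ∘ₗ
            (Coalgebra.comul (R := k) (A := C)).rTensor C) ∘ₗ Coalgebra.comul)
          (((TensorProduct.assoc k D D D).toLinearMap ∘ₗ
            (Coalgebra.comul (R := k) (A := D)).rTensor D) ∘ₗ Coalgebra.comul) := by
        rw [hB, LinearMap.comp_assoc, ← TensorProduct.map_comp]
    _ = shufflePhi ∘ₗ TensorProduct.map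
          ((Coalgebra.comul (R := k) (A := C)).lTensor C ∘ₗ Coalgebra.comul)
          ((Coalgebra.comul (R := k) (A := D)).lTensor D ∘ₗ Coalgebra.comul) := by
        rw [LinearMap.comp_assoc, Coalgebra.coassoc, LinearMap.comp_assoc, Coalgebra.coassoc]
    _ = (shufflePhi ∘ₗ TensorProduct.map
          ((Coalgebra.comul (R := k) (A := C)).lTensor C)
          ((Coalgebra.comul (R := k) (A := D)).lTensor D)) ∘ₗ
          TensorProduct.map (Coalgebra.comul (R := k)) (Coalgebra.comul (R := k)) := by
        rw [TensorProduct.map_comp, LinearMap.comp_assoc]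
    _ = (Coalgebra.comul (R := k) (A := C ⊗[k] D)).lTensor (C ⊗[k] D) ∘ₗ Coalgebra.comul := by
        rw [← hA, hcomul]; simp only [LinearMap.comp_assoc]

lemma tensor_rTensor_counit :
    (Coalgebra.counit (R := k) (A := C ⊗[k] D)).rTensor (C ⊗[k] D) ∘ₗ Coalgebra.comul
      = TensorProduct.mk k k (C ⊗[k] D) 1 := by
  have claim : (Coalgebra.counit (R := k) (A := C ⊗[k] D)).rTensor (C ⊗[k] D) ∘ₗ
        (tensorTensorTensorComm k C C D D).toLinearMap
      = ((LinearMap.mul' k k).rTensor (C ⊗[k] D) ∘ₗ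
            (tensorTensorTensorComm k k C k D).toLinearMap) ∘ₗ
          TensorProduct.map ((Coalgebra.counit (R := k)).rTensor C)
            ((Coalgebra.counit (R := k)).rTensor D) := by
    apply TensorProduct.ext_fourfold'
    intro a b c d
    simp [TensorProduct.counit_tmul, mul_comm]
  apply TensorProduct.ext'
  intro c d
  have h1 : Coalgebra.comul (R := k) (c ⊗ₜ[k] d)
      = tensorTensorTensorComm k C C D D
          ((Coalgebra.comul (R := k) c) ⊗ₜ[k] (Coalgebra.comul (R := k) d)) := rfl
  have h2 := LinearMap.congr_fun claim
      ((Coalgebra.comul (R := k) c) ⊗ₜ[k] (Coalgebra.comul (R := k) d))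
  simp only [LinearMap.comp_apply, LinearEquiv.coe_coe] at h2
  simp only [LinearMap.comp_apply, h1, h2, TensorProduct.map_tmul,
    Coalgebra.rTensor_counit_comul]
  simp

lemma tensor_lTensor_counit :
    (Coalgebra.counit (R := k) (A := C ⊗[k] D)).lTensor (C ⊗[k] D) ∘ₗ Coalgebra.comul
      = (TensorProduct.mk k (C ⊗[k] D) k).flip 1 := by
  have claim : (Coalgebra.counit (R := k) (A := C ⊗[k] D)).lTensor (C ⊗[k] D) ∘ₗ
        (tensorTensorTensorComm k C C D D).toLinearMap
      = ((LinearMap.mul' k k).lTensor (C ⊗[k] D) ∘ₗ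
            (tensorTensorTensorComm k C k D k).toLinearMap) ∘ₗ
          TensorProduct.map ((Coalgebra.counit (R := k)).lTensor C)
            ((Coalgebra.counit (R := k)).lTensor D) := by
    apply TensorProduct.ext_fourfold'
    intro a b c d
    simp [TensorProduct.counit_tmul, mul_comm]
  apply TensorProduct.ext'
  intro c d
  have h1 : Coalgebra.comul (R := k) (c ⊗ₜ[k] d)
      = tensorTensorTensorComm k C C D D
          ((Coalgebra.comul (R := k) c) ⊗ₜ[k] (Coalgebra.comul (R := k) d)) := rfl
  have h2 := LinearMap.congr_fun claim
      ((Coalgebra.comul (R := k) c) ⊗ₜ[k] (Coalgebra.comul (R := k) d))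
  simp only [LinearMap.comp_apply, LinearEquiv.coe_coe] at h2
  simp only [LinearMap.comp_apply, h1, h2, TensorProduct.map_tmul,
    Coalgebra.lTensor_counit_comul]
  simp

end TensorCoalg

section ConvLemmas

variable {C : Type*} [AddCommMonoid C] [Module k C]

lemma conv_one_left [CoalgebraStruct k C]
    (hcu : (Coalgebra.counit (R := k) (A := C)).rTensor C ∘ₗ Coalgebra.comul
      = TensorProduct.mk k k C 1)
    (f : C →ₗ[k] k) : conv k (convOne k) f = f := by
  ext a
  have h1 : TensorProduct.map (Coalgebra.counit (R := k) (A := C)) f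
      = LinearMap.lTensor k f ∘ₗ (Coalgebra.counit (R := k)).rTensor C := by
    rw [LinearMap.lTensor_comp_rTensor]
  have h2 := LinearMap.congr_fun hcu a
  simp only [LinearMap.comp_apply] at h2
  simp only [conv, convOne, LinearMap.comp_apply, h1, h2]
  simp

lemma conv_one_right [CoalgebraStruct k C]
    (hcu : (Coalgebra.counit (R := k) (A := C)).lTensor C ∘ₗ Coalgebra.comul
      = (TensorProduct.mk k C k).flip 1)
    (f : C →ₗ[k] k) : conv k f (convOne k) = f := by
  ext a
  have h1 : TensorProduct.map f (Coalgebra.counit (R := k) (A := C))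
      = LinearMap.rTensor k f ∘ₗ (Coalgebra.counit (R := k)).lTensor C := by
    rw [LinearMap.rTensor_comp_lTensor]
  have h2 := LinearMap.congr_fun hcu a
  simp only [LinearMap.comp_apply] at h2
  simp only [conv, convOne, LinearMap.comp_apply, h1, h2]
  simp

lemma conv_assoc [CoalgebraStruct k C]
    (coas : (TensorProduct.assoc k C C C).toLinearMap ∘ₗ
        (Coalgebra.comul (R := k) (A := C)).rTensor C ∘ₗ Coalgebra.comul
      = (Coalgebra.comul (R := k) (A := C)).lTensor C ∘ₗ Coalgebra.comul)
    (f g h : C →ₗ[k] k) :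
    conv k (conv k f g) h = conv k f (conv k g h) := by
  have key : LinearMap.mul' k k ∘ₗ TensorProduct.map (LinearMap.mul' k k) LinearMap.id ∘ₗ
        TensorProduct.map (TensorProduct.map f g) h
      = (LinearMap.mul' k k ∘ₗ TensorProduct.map LinearMap.id (LinearMap.mul' k k) ∘ₗ
          TensorProduct.map f (TensorProduct.map g h)) ∘ₗ
          (TensorProduct.assoc k C C C).toLinearMap := by
    apply TensorProduct.ext_threefold
    intro x y z
    simp [mul_assoc]
  have e1 : TensorProduct.map (conv k f g) h
      = TensorProduct.map (LinearMap.mul' k k) LinearMap.id ∘ₗ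
          TensorProduct.map (TensorProduct.map f g) h ∘ₗ
          TensorProduct.map (Coalgebra.comul (R := k)) LinearMap.id := by
    rw [← TensorProduct.map_comp, ← TensorProduct.map_comp]
    simp [conv, LinearMap.comp_assoc]
  have e2 : TensorProduct.map f (conv k g h)
      = TensorProduct.map LinearMap.id (LinearMap.mul' k k) ∘ₗ
          TensorProduct.map f (TensorProduct.map g h) ∘ₗ
          TensorProduct.map LinearMap.id (Coalgebra.comul (R := k)) := by
    rw [← TensorProduct.map_comp, ← TensorProduct.map_comp]
    simp [conv, LinearMap.comp_assoc]
  have hr : TensorProduct.map (Coalgebra.comul (R := k) (A := C)) (LinearMap.id (M := C))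
      = (Coalgebra.comul (R := k) (A := C)).rTensor C := rfl
  have hl : TensorProduct.map (LinearMap.id (M := C)) (Coalgebra.comul (R := k) (A := C))
      = (Coalgebra.comul (R := k) (A := C)).lTensor C := rfl
  show LinearMap.mul' k k ∘ₗ TensorProduct.map (conv k f g) h ∘ₗ Coalgebra.comul
      = LinearMap.mul' k k ∘ₗ TensorProduct.map f (conv k g h) ∘ₗ Coalgebra.comul
  rw [e1, e2, hr, hl]
  calc LinearMap.mul' k k ∘ₗ (TensorProduct.map (LinearMap.mul' k k) LinearMap.id ∘ₗ
        TensorProduct.map (TensorProduct.map f g) h ∘ₗ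
        (Coalgebra.comul (R := k) (A := C)).rTensor C) ∘ₗ Coalgebra.comul
      = (LinearMap.mul' k k ∘ₗ TensorProduct.map (LinearMap.mul' k k) LinearMap.id ∘ₗ
          TensorProduct.map (TensorProduct.map f g) h) ∘ₗ
          ((Coalgebra.comul (R := k) (A := C)).rTensor C ∘ₗ Coalgebra.comul) := by
        simp only [LinearMap.comp_assoc]
    _ = (LinearMap.mul' k k ∘ₗ TensorProduct.map LinearMap.id (LinearMap.mul' k k) ∘ₗ
          TensorProduct.map f (TensorProduct.map g h)) ∘ₗ
          ((TensorProduct.assoc k C C C).toLinearMap ∘ₗ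
            (Coalgebra.comul (R := k) (A := C)).rTensor C ∘ₗ Coalgebra.comul) := by
        rw [key]; simp only [LinearMap.comp_assoc]
    _ = (LinearMap.mul' k k ∘ₗ TensorProduct.map LinearMap.id (LinearMap.mul' k k) ∘ₗ
          TensorProduct.map f (TensorProduct.map g h)) ∘ₗ
          ((Coalgebra.comul (R := k) (A := C)).lTensor C ∘ₗ Coalgebra.comul) := by
        rw [coas]
    _ = LinearMap.mul' k k ∘ₗ (TensorProduct.map LinearMap.id (LinearMap.mul' k k) ∘ₗ
          TensorProduct.map f (TensorProduct.map g h) ∘ₗ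
          (Coalgebra.comul (R := k) (A := C)).lTensor C) ∘ₗ Coalgebra.comul := by
        simp only [LinearMap.comp_assoc]

variable {D : Type*} [AddCommMonoid D] [Module k D]

lemma conv_comp [CoalgebraStruct k C] [CoalgebraStruct k D] (φ : C →ₗ[k] D)
    (hφ : Coalgebra.comul (R := k) ∘ₗ φ = TensorProduct.map φ φ ∘ₗ Coalgebra.comul)
    (f g : D →ₗ[k] k) : conv k f g ∘ₗ φ = conv k (f ∘ₗ φ) (g ∘ₗ φ) := by
  unfold conv
  rw [TensorProduct.map_comp]
  simp only [LinearMap.comp_assoc, hφ]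

lemma convOne_comp [CoalgebraStruct k C] [CoalgebraStruct k D] (φ : C →ₗ[k] D)
    (hφ : Coalgebra.counit (R := k) ∘ₗ φ = Coalgebra.counit) :
    (convOne k : D →ₗ[k] k) ∘ₗ φ = convOne k := hφ

end ConvLemmas

end Aux

/-- If `σ : A ⊗ A → k` restricts trivially to `H ⊗ H` (through the
bialgebra map `ι : H → A`) and `α ⇀ σ` does as well, then `α ∘ ι` is an algebra map. -/
theorem statement_15 {k : Type*} [Field k] {H : Type*} [Ring H] [Bialgebra k H]
    {A : Type*} [Ring A] [HopfAlgebra k A] (ι : H →ₐc[k] A)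
    (σ : A ⊗[k] A →ₗ[k] k)
    (hσ : ∀ h h' : H, σ (ι h ⊗ₜ[k] ι h')
      = Coalgebra.counit (R := k) h * Coalgebra.counit (R := k) h')
    (α αinv : A →ₗ[k] k)
    (hinv1 : conv k α αinv = convOne k) (hinv2 : conv k αinv α = convOne k)
    (hact : ∀ h h' : H, act k α αinv σ (ι h ⊗ₜ[k] ι h')
      = Coalgebra.counit (R := k) h * Coalgebra.counit (R := k) h') :
    α 1 = 1 ∧ ∀ h h' : H, α (ι h * ι h') = α (ι h) * α (ι h') := by
  classical
  set ιl : H →ₗ[k] A := (ι : H →ₗ[k] A) with hιl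
  set φ : H ⊗[k] H →ₗ[k] A ⊗[k] A := TensorProduct.map ιl ιl with hφdef
  set μ : H ⊗[k] H →ₗ[k] A := LinearMap.mul' k A ∘ₗ φ with hμdef
  -- `φ` is compatible with comultiplication and counit
  have hι : TensorProduct.map ιl ιl ∘ₗ Coalgebra.comul = Coalgebra.comul ∘ₗ ιl :=
    CoalgHomClass.map_comp_comul ι
  have hιε : Coalgebra.counit (R := k) ∘ₗ ιl = Coalgebra.counit :=
    CoalgHomClass.counit_comp ι
  have hφcomul : Coalgebra.comul (R := k) ∘ₗ φ = TensorProduct.map φ φ ∘ₗ Coalgebra.comul := by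
    have e1 : TensorProduct.map (Coalgebra.comul (R := k) (A := A)) Coalgebra.comul ∘ₗ φ
        = TensorProduct.map (TensorProduct.map ιl ιl) (TensorProduct.map ιl ιl) ∘ₗ
            TensorProduct.map (Coalgebra.comul (R := k) (A := H)) Coalgebra.comul := by
      rw [hφdef, ← TensorProduct.map_comp, ← TensorProduct.map_comp, ← hι]
    have hAA : Coalgebra.comul (R := k) (A := A ⊗[k] A)
        = (TensorProduct.tensorTensorTensorComm k A A A A).toLinearMap ∘ₗ
            TensorProduct.map Coalgebra.comul Coalgebra.comul := rfl
    have hHH : Coalgebra.comul (R := k) (A := H ⊗[k] H)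
        = (TensorProduct.tensorTensorTensorComm k H H H H).toLinearMap ∘ₗ
            TensorProduct.map Coalgebra.comul Coalgebra.comul := rfl
    rw [hAA, hHH, LinearMap.comp_assoc, e1, ← LinearMap.comp_assoc,
      ttt_natural, LinearMap.comp_assoc]
  have hφcounit : Coalgebra.counit (R := k) ∘ₗ φ = Coalgebra.counit := by
    have hAA : Coalgebra.counit (R := k) (A := A ⊗[k] A)
        = LinearMap.mul' k k ∘ₗ TensorProduct.map Coalgebra.counit Coalgebra.counit := by
      apply TensorProduct.ext'; intro x y; simp [TensorProduct.counit_tmul, mul_comm]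
    have hHH : Coalgebra.counit (R := k) (A := H ⊗[k] H)
        = LinearMap.mul' k k ∘ₗ TensorProduct.map Coalgebra.counit Coalgebra.counit := by
      apply TensorProduct.ext'; intro x y; simp [TensorProduct.counit_tmul, mul_comm]
    rw [hAA, hHH, LinearMap.comp_assoc, hφdef, ← TensorProduct.map_comp, hιε]
  -- multiplication of `A` is compatible with comultiplication and counit
  have hmulclaim : ∀ u v : A ⊗[k] A,
      TensorProduct.map (LinearMap.mul' k A) (LinearMap.mul' k A)
        (TensorProduct.tensorTensorTensorComm k A A A A (u ⊗ₜ[k] v)) = u * v := by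
    intro u v
    induction u using TensorProduct.induction_on with
    | zero => simp
    | add x y hx hy =>
      simp only [TensorProduct.add_tmul, map_add, LinearEquiv.map_add, add_mul]
      rw [hx, hy]
    | tmul a b =>
      induction v using TensorProduct.induction_on with
      | zero => simp
      | add x y hx hy =>
        simp only [TensorProduct.tmul_add, map_add, LinearEquiv.map_add, mul_add]
        rw [hx, hy]
      | tmul c d =>
        simp [Algebra.TensorProduct.tmul_mul_tmul]
  have hmulcomul : Coalgebra.comul (R := k) ∘ₗ LinearMap.mul' k A
      = TensorProduct.map (LinearMap.mul' k A) (LinearMap.mul' k A) ∘ₗ Coalgebra.comul := by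
    apply TensorProduct.ext'
    intro x y
    have h1 : Coalgebra.comul (R := k) (x ⊗ₜ[k] y)
        = TensorProduct.tensorTensorTensorComm k A A A A
            ((Coalgebra.comul (R := k) x) ⊗ₜ[k] (Coalgebra.comul (R := k) y)) := rfl
    simp only [LinearMap.comp_apply, LinearMap.mul'_apply, Bialgebra.comul_mul, h1, hmulclaim]
  have hmulcounit : Coalgebra.counit (R := k) ∘ₗ LinearMap.mul' k A = Coalgebra.counit := by
    apply TensorProduct.ext'
    intro x y
    have h1 : Coalgebra.counit (R := k) (x ⊗ₜ[k] y)
        = Coalgebra.counit (R := k) x * Coalgebra.counit (R := k) y := by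
      simp [TensorProduct.counit_tmul, mul_comm]
    simp [Bialgebra.counit_mul, h1]
  -- hence `μ` is compatible as well
  have hμcomul : Coalgebra.comul (R := k) ∘ₗ μ = TensorProduct.map μ μ ∘ₗ Coalgebra.comul := by
    rw [hμdef, ← LinearMap.comp_assoc, hmulcomul, LinearMap.comp_assoc, hφcomul,
      ← LinearMap.comp_assoc, ← TensorProduct.map_comp]
  have hμcounit : Coalgebra.counit (R := k) ∘ₗ μ = Coalgebra.counit := by
    rw [hμdef, ← LinearMap.comp_assoc, hmulcounit, hφcounit]
  -- counit on `H ⊗ H` at a pure tensor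
  have hcuHH : ∀ h h' : H, convOne k (h ⊗ₜ[k] h')
      = Coalgebra.counit (R := k) h * Coalgebra.counit (R := k) h' := by
    intro h h'
    simp [convOne, TensorProduct.counit_tmul, mul_comm]
  -- restriction hypotheses as linear map identities
  have hσ' : σ ∘ₗ φ = convOne k := by
    apply TensorProduct.ext'
    intro h h'
    simp only [LinearMap.comp_apply, hφdef, TensorProduct.map_tmul, hcuHH]
    exact hσ h h'
  have hact' : act k α αinv σ ∘ₗ φ = convOne k := by
    apply TensorProduct.ext'
    intro h h'
    simp only [LinearMap.comp_apply, hφdef, TensorProduct.map_tmul, hcuHH]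
    exact hact h h'
  -- the coalgebra axioms for `H ⊗ H`
  have coasHH := tensor_coassoc (k := k) (C := H) (D := H)
  have hcuR := tensor_rTensor_counit (k := k) (C := H) (D := H)
  have hcuL := tensor_lTensor_counit (k := k) (C := H) (D := H)
  -- P := (x ⊗ y ↦ α(ιx)α(ιy)),  F := α ∘ μ,  G := αinv ∘ μ
  set P : H ⊗[k] H →ₗ[k] k := (LinearMap.mul' k k ∘ₗ TensorProduct.map α α) ∘ₗ φ with hPdef
  set F : H ⊗[k] H →ₗ[k] k := α ∘ₗ μ with hFdef
  set G : H ⊗[k] H →ₗ[k] k := αinv ∘ₗ μ with hGdef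
  have hPG : conv k P G = convOne k := by
    have h0 := hact'
    unfold act at h0
    rw [conv_comp φ hφcomul, conv_comp φ hφcomul, hσ', conv_one_right hcuL] at h0
    have hYφ : (αinv ∘ₗ LinearMap.mul' k A) ∘ₗ φ = G := by
      rw [hGdef, hμdef, LinearMap.comp_assoc]
    rw [hYφ] at h0
    exact h0
  have hFG : conv k F G = convOne k := by
    rw [hFdef, hGdef, ← conv_comp μ hμcomul, hinv1]
    exact convOne_comp μ hμcounit
  have hGF : conv k G F = convOne k := by
    rw [hFdef, hGdef, ← conv_comp μ hμcomul, hinv2]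
    exact convOne_comp μ hμcounit
  have hPF : P = F := by
    calc P = conv k P (convOne k) := (conv_one_right hcuL P).symm
      _ = conv k P (conv k G F) := by rw [hGF]
      _ = conv k (conv k P G) F := (conv_assoc coasHH P G F).symm
      _ = conv k (convOne k) F := by rw [hPG]
      _ = F := conv_one_left hcuR F
  have hmul : ∀ h h' : H, α (ι h * ι h') = α (ι h) * α (ι h') := by
    intro h h'
    have := LinearMap.congr_fun hPF (h ⊗ₜ[k] h')
    simp only [hPdef, hFdef, hμdef, hφdef, LinearMap.comp_apply, TensorProduct.map_tmul,
      LinearMap.mul'_apply] at this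
    exact this.symm
  refine ⟨?_, hmul⟩
  have ha : α 1 * αinv 1 = 1 := by
    have h0 := LinearMap.congr_fun hinv1 (1 : A)
    have h1 : Coalgebra.comul (R := k) (1 : A) = (1 : A) ⊗ₜ[k] (1 : A) := by
      rw [Bialgebra.comul_one, Algebra.TensorProduct.one_def]
    simp only [conv, convOne, LinearMap.comp_apply, h1, TensorProduct.map_tmul,
      LinearMap.mul'_apply, Bialgebra.counit_one] at h0
    exact h0
  have hsq : α 1 = α 1 * α 1 := by
    have := hmul 1 1
    simpa using this
  calc α 1 = α 1 * (α 1 * αinv 1) := by rw [ha, mul_one]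
    _ = (α 1 * α 1) * αinv 1 := by ring
    _ = α 1 * αinv 1 := by rw [← hsq]
    _ = 1 := ha

end PaperA2
end
end

section
/- Let eta : A (x) A -> k be a linear map and lambda in k such that eta(x (x) y) = lambda * eta(y (x) x) for all x, y in A. Then the identity sum eta(x (x) y_(1)*z_(1)) eta(y_(2) (x) z_(2)) = sum eta(y_(1) (x) z_(1)) eta(x (x) y_(2)*z_(2)) holds for all x, y, z in A if and only if the identity sum eta(x_(1)*y_(1) (x) z) eta(x_(2) (x) y_(2)) = sum eta(x_(1) (x) y_(1)) eta(x_(2)*y_(2) (x) z) holds for all x, y, z in A. -/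
/-!
Common framework: convolution algebras, Hopf 2-cocycles, the Nichols algebra `B` of Cartan
type `A₂` with `q = -1`, its bosonization `A = B # H`, bilinear forms on `B` and their
extensions to `A ⊗ A`, following García–Sánchez, "Hopf cocycles associated to pointed and
copointed deformations over S₃" (arXiv:2108.11432).
-/

open scoped TensorProduct
open TensorProduct

noncomputable section

namespace PaperA2

section Statement16Helpers

variable {k : Type*} [Field k] {A : Type*} [Ring A] [Bialgebra k A]

private lemma counit_smul_sum (x : A) (rx : Coalgebra.Repr k x (A × A)) :
    ∑ h ∈ rx.index, Coalgebra.counit (R := k) (rx.right h) • rx.left h = x := by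
  have := congrArg (TensorProduct.rid k A) (Coalgebra.sum_tmul_counit_eq rx)
  rw [map_sum] at this
  simp only [TensorProduct.rid_tmul, one_smul] at this
  exact this

private lemma smul_counit_sum (x : A) (rx : Coalgebra.Repr k x (A × A)) :
    ∑ h ∈ rx.index, Coalgebra.counit (R := k) (rx.left h) • rx.right h = x := by
  have := congrArg (TensorProduct.lid k A) (Coalgebra.sum_counit_tmul_eq rx)
  rw [map_sum] at this
  simp only [TensorProduct.lid_tmul, one_smul] at this
  exact this

private lemma collapse1 (η : A ⊗[k] A →ₗ[k] k) (x m : A) (t : k) (rx : Coalgebra.Repr k x (A × A)) :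
    ∑ h ∈ rx.index, η (rx.left h ⊗ₜ m) * (Coalgebra.counit (R := k) (rx.right h) * t)
      = η (x ⊗ₜ m) * t := by
  conv_rhs => rw [← counit_smul_sum x rx]
  rw [TensorProduct.sum_tmul]
  simp only [← TensorProduct.smul_tmul', map_sum, map_smul, smul_eq_mul, Finset.sum_mul]
  exact Finset.sum_congr rfl fun h _ => by ring

private lemma collapse2 (η : A ⊗[k] A →ₗ[k] k) (x m : A) (t : k) (rx : Coalgebra.Repr k x (A × A)) :
    ∑ h ∈ rx.index, η (m ⊗ₜ rx.left h) * (t * Coalgebra.counit (R := k) (rx.right h))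
      = η (m ⊗ₜ x) * t := by
  conv_rhs => rw [← counit_smul_sum x rx]
  rw [TensorProduct.tmul_sum]
  simp only [TensorProduct.tmul_smul, map_sum, map_smul, smul_eq_mul, Finset.sum_mul]
  exact Finset.sum_congr rfl fun h _ => by ring

private lemma collapse3 (η : A ⊗[k] A →ₗ[k] k) (x m : A) (t : k) (rx : Coalgebra.Repr k x (A × A)) :
    ∑ h ∈ rx.index, Coalgebra.counit (R := k) (rx.left h) * t * η (rx.right h ⊗ₜ m)
      = t * η (x ⊗ₜ m) := by
  conv_rhs => rw [← smul_counit_sum x rx]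
  rw [TensorProduct.sum_tmul]
  simp only [← TensorProduct.smul_tmul', map_sum, map_smul, smul_eq_mul, Finset.mul_sum]
  exact Finset.sum_congr rfl fun h _ => by ring

private lemma collapse4 (η : A ⊗[k] A →ₗ[k] k) (x m : A) (t : k) (rx : Coalgebra.Repr k x (A × A)) :
    ∑ h ∈ rx.index, t * Coalgebra.counit (R := k) (rx.left h) * η (m ⊗ₜ rx.right h)
      = t * η (m ⊗ₜ x) := by
  conv_rhs => rw [← smul_counit_sum x rx]
  rw [TensorProduct.tmul_sum]
  simp only [TensorProduct.tmul_smul, map_sum, map_smul, smul_eq_mul, Finset.mul_sum]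
  exact Finset.sum_congr rfl fun h _ => by ring

private lemma conv_eval_right (f g : A ⊗[k] (A ⊗[k] A) →ₗ[k] k) (x y z : A)
    (rx : Coalgebra.Repr k x (A × A)) (ry : Coalgebra.Repr k y (A × A)) (rz : Coalgebra.Repr k z (A × A)) :
    conv k f g (x ⊗ₜ (y ⊗ₜ z)) =
      ∑ j ∈ rz.index, ∑ i ∈ ry.index, ∑ h ∈ rx.index,
        f (rx.left h ⊗ₜ (ry.left i ⊗ₜ rz.left j)) *
          g (rx.right h ⊗ₜ (ry.right i ⊗ₜ rz.right j)) := by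
  simp only [conv, LinearMap.comp_apply, TensorProduct.comul_tmul,
    TensorProduct.map_tmul, ← rx.eq, ← ry.eq, ← rz.eq]
  simp only [TensorProduct.sum_tmul, TensorProduct.tmul_sum, map_sum,
    TensorProduct.tensorTensorTensorComm_tmul, TensorProduct.map_tmul,
      TensorProduct.AlgebraTensorModule.tensorTensorTensorComm_tmul,
    LinearMap.mul'_apply, LinearEquiv.coe_coe]

private lemma conv_eval_left (f g : (A ⊗[k] A) ⊗[k] A →ₗ[k] k) (x y z : A)
    (rx : Coalgebra.Repr k x (A × A)) (ry : Coalgebra.Repr k y (A × A)) (rz : Coalgebra.Repr k z (A × A)) :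
    conv k f g ((y ⊗ₜ z) ⊗ₜ x) =
      ∑ j ∈ rz.index, ∑ i ∈ ry.index, ∑ h ∈ rx.index,
        f ((ry.left i ⊗ₜ rz.left j) ⊗ₜ rx.left h) *
          g ((ry.right i ⊗ₜ rz.right j) ⊗ₜ rx.right h) := by
  have : conv k f g ((y ⊗ₜ z) ⊗ₜ x) =
      ∑ h ∈ rx.index, ∑ j ∈ rz.index, ∑ i ∈ ry.index,
        f ((ry.left i ⊗ₜ rz.left j) ⊗ₜ rx.left h) *
          g ((ry.right i ⊗ₜ rz.right j) ⊗ₜ rx.right h) := by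
    simp only [conv, LinearMap.comp_apply, TensorProduct.comul_tmul,
      TensorProduct.map_tmul, ← rx.eq, ← ry.eq, ← rz.eq]
    simp only [TensorProduct.sum_tmul, TensorProduct.tmul_sum, map_sum,
      TensorProduct.tensorTensorTensorComm_tmul, TensorProduct.map_tmul,
      TensorProduct.AlgebraTensorModule.tensorTensorTensorComm_tmul,
      LinearMap.mul'_apply, LinearEquiv.coe_coe]
  rw [this, Finset.sum_comm]
  exact Finset.sum_congr rfl fun j _ => Finset.sum_comm

private lemma ext_threefold' {Q : Type*} [AddCommMonoid Q] [Module k Q]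
    {g h : A ⊗[k] (A ⊗[k] A) →ₗ[k] Q}
    (H : ∀ x y z : A, g (x ⊗ₜ (y ⊗ₜ z)) = h (x ⊗ₜ (y ⊗ₜ z))) : g = h := by
  ext x y z
  exact H x y z

variable (η : A ⊗[k] A →ₗ[k] k)

private lemma F1_apply (x y z : A) (ry : Coalgebra.Repr k y (A × A)) (rz : Coalgebra.Repr k z (A × A)) :
    conv k (η ∘ₗ TensorProduct.map (LinearMap.id (M := A)) (LinearMap.mul' k A))
      (LinearMap.mul' k k ∘ₗ TensorProduct.map CoalgebraStruct.counit η) (x ⊗ₜ (y ⊗ₜ z)) =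
    ∑ j ∈ rz.index, ∑ i ∈ ry.index,
      η (x ⊗ₜ (ry.left i * rz.left j)) * η (ry.right i ⊗ₜ rz.right j) := by
  rw [conv_eval_right _ _ x y z (Coalgebra.Repr.arbitrary k x) ry rz]
  refine Finset.sum_congr rfl fun j _ => Finset.sum_congr rfl fun i _ => ?_
  simp only [LinearMap.comp_apply, TensorProduct.map_tmul, LinearMap.mul'_apply,
    LinearMap.id_coe, id_eq]
  exact collapse1 η x _ _ _

private lemma G1_apply (x y z : A) (ry : Coalgebra.Repr k y (A × A)) (rz : Coalgebra.Repr k z (A × A)) :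
    conv k (LinearMap.mul' k k ∘ₗ TensorProduct.map CoalgebraStruct.counit η)
      (η ∘ₗ TensorProduct.map (LinearMap.id (M := A)) (LinearMap.mul' k A)) (x ⊗ₜ (y ⊗ₜ z)) =
    ∑ j ∈ rz.index, ∑ i ∈ ry.index,
      η (ry.left i ⊗ₜ rz.left j) * η (x ⊗ₜ (ry.right i * rz.right j)) := by
  rw [conv_eval_right _ _ x y z (Coalgebra.Repr.arbitrary k x) ry rz]
  refine Finset.sum_congr rfl fun j _ => Finset.sum_congr rfl fun i _ => ?_
  simp only [LinearMap.comp_apply, TensorProduct.map_tmul, LinearMap.mul'_apply,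
    LinearMap.id_coe, id_eq]
  rw [collapse3 η x _ _ _]

private lemma F2_apply (x y z : A) (ry : Coalgebra.Repr k y (A × A)) (rz : Coalgebra.Repr k z (A × A)) :
    conv k (η ∘ₗ TensorProduct.map (LinearMap.mul' k A) (LinearMap.id (M := A)))
      (LinearMap.mul' k k ∘ₗ TensorProduct.map η CoalgebraStruct.counit) ((y ⊗ₜ z) ⊗ₜ x) =
    ∑ j ∈ rz.index, ∑ i ∈ ry.index,
      η ((ry.left i * rz.left j) ⊗ₜ x) * η (ry.right i ⊗ₜ rz.right j) := by
  rw [conv_eval_left _ _ x y z (Coalgebra.Repr.arbitrary k x) ry rz]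
  refine Finset.sum_congr rfl fun j _ => Finset.sum_congr rfl fun i _ => ?_
  simp only [LinearMap.comp_apply, TensorProduct.map_tmul, LinearMap.mul'_apply,
    LinearMap.id_coe, id_eq]
  exact collapse2 η x _ _ _

private lemma G2_apply (x y z : A) (ry : Coalgebra.Repr k y (A × A)) (rz : Coalgebra.Repr k z (A × A)) :
    conv k (LinearMap.mul' k k ∘ₗ TensorProduct.map η CoalgebraStruct.counit)
      (η ∘ₗ TensorProduct.map (LinearMap.mul' k A) (LinearMap.id (M := A))) ((y ⊗ₜ z) ⊗ₜ x) =
    ∑ j ∈ rz.index, ∑ i ∈ ry.index,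
      η (ry.left i ⊗ₜ rz.left j) * η ((ry.right i * rz.right j) ⊗ₜ x) := by
  rw [conv_eval_left _ _ x y z (Coalgebra.Repr.arbitrary k x) ry rz]
  refine Finset.sum_congr rfl fun j _ => Finset.sum_congr rfl fun i _ => ?_
  simp only [LinearMap.comp_apply, TensorProduct.map_tmul, LinearMap.mul'_apply,
    LinearMap.id_coe, id_eq]
  exact collapse4 η x _ _ _

end Statement16Helpers

/-- If `η : A ⊗ A → k` satisfies `η(x ⊗ y) = λ η(y ⊗ x)`, then the first
commutation identity holds for all `x, y, z ∈ A` iff the second one does. -/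
theorem statement_16 {k : Type*} [Field k] {A : Type*} [Ring A] [Bialgebra k A]
    (η : A ⊗[k] A →ₗ[k] k) (lam : k)
    (hsym : ∀ x y : A, η (x ⊗ₜ[k] y) = lam * η (y ⊗ₜ[k] x)) :
    Comm1 k η ↔ Comm2 k η := by
  have F1 := @F1_apply k _ A _ _ η
  have G1 := @G1_apply k _ A _ _ η
  have F2 := @F2_apply k _ A _ _ η
  have G2 := @G2_apply k _ A _ _ η
  constructor
  · intro h1
    refine TensorProduct.ext_threefold fun y z x => ?_
    have h1' := congrFun (congrArg DFunLike.coe h1) (x ⊗ₜ[k] (y ⊗ₜ[k] z))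
    rw [F1 x y z (Coalgebra.Repr.arbitrary k y) (Coalgebra.Repr.arbitrary k z),
      G1 x y z (Coalgebra.Repr.arbitrary k y) (Coalgebra.Repr.arbitrary k z)] at h1'
    rw [F2 x y z (Coalgebra.Repr.arbitrary k y) (Coalgebra.Repr.arbitrary k z),
      G2 x y z (Coalgebra.Repr.arbitrary k y) (Coalgebra.Repr.arbitrary k z)]
    calc ∑ j ∈ (Coalgebra.Repr.arbitrary k z).index, ∑ i ∈ (Coalgebra.Repr.arbitrary k y).index,
          η (((Coalgebra.Repr.arbitrary k y).left i * (Coalgebra.Repr.arbitrary k z).left j) ⊗ₜ x) *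
            η ((Coalgebra.Repr.arbitrary k y).right i ⊗ₜ (Coalgebra.Repr.arbitrary k z).right j)
        = lam * ∑ j ∈ (Coalgebra.Repr.arbitrary k z).index,
            ∑ i ∈ (Coalgebra.Repr.arbitrary k y).index,
            η (x ⊗ₜ ((Coalgebra.Repr.arbitrary k y).left i * (Coalgebra.Repr.arbitrary k z).left j)) *
              η ((Coalgebra.Repr.arbitrary k y).right i ⊗ₜ (Coalgebra.Repr.arbitrary k z).right j) := by
          rw [Finset.mul_sum]
          refine Finset.sum_congr rfl fun j _ => ?_
          rw [Finset.mul_sum]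
          refine Finset.sum_congr rfl fun i _ => ?_
          rw [hsym]; ring
      _ = lam * ∑ j ∈ (Coalgebra.Repr.arbitrary k z).index,
            ∑ i ∈ (Coalgebra.Repr.arbitrary k y).index,
            η ((Coalgebra.Repr.arbitrary k y).left i ⊗ₜ (Coalgebra.Repr.arbitrary k z).left j) *
              η (x ⊗ₜ ((Coalgebra.Repr.arbitrary k y).right i * (Coalgebra.Repr.arbitrary k z).right j)) := by
          rw [h1']
      _ = _ := by
          rw [Finset.mul_sum]
          refine Finset.sum_congr rfl fun j _ => ?_
          rw [Finset.mul_sum]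
          refine Finset.sum_congr rfl fun i _ => ?_
          rw [hsym _ x]; ring
  · intro h2
    refine ext_threefold' fun x y z => ?_
    have h2' := congrFun (congrArg DFunLike.coe h2) ((y ⊗ₜ[k] z) ⊗ₜ[k] x)
    rw [F2 x y z (Coalgebra.Repr.arbitrary k y) (Coalgebra.Repr.arbitrary k z),
      G2 x y z (Coalgebra.Repr.arbitrary k y) (Coalgebra.Repr.arbitrary k z)] at h2'
    rw [F1 x y z (Coalgebra.Repr.arbitrary k y) (Coalgebra.Repr.arbitrary k z),
      G1 x y z (Coalgebra.Repr.arbitrary k y) (Coalgebra.Repr.arbitrary k z)]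
    calc ∑ j ∈ (Coalgebra.Repr.arbitrary k z).index, ∑ i ∈ (Coalgebra.Repr.arbitrary k y).index,
          η (x ⊗ₜ ((Coalgebra.Repr.arbitrary k y).left i * (Coalgebra.Repr.arbitrary k z).left j)) *
            η ((Coalgebra.Repr.arbitrary k y).right i ⊗ₜ (Coalgebra.Repr.arbitrary k z).right j)
        = lam * ∑ j ∈ (Coalgebra.Repr.arbitrary k z).index,
            ∑ i ∈ (Coalgebra.Repr.arbitrary k y).index,
            η (((Coalgebra.Repr.arbitrary k y).left i * (Coalgebra.Repr.arbitrary k z).left j) ⊗ₜ x) *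
              η ((Coalgebra.Repr.arbitrary k y).right i ⊗ₜ (Coalgebra.Repr.arbitrary k z).right j) := by
          rw [Finset.mul_sum]
          refine Finset.sum_congr rfl fun j _ => ?_
          rw [Finset.mul_sum]
          refine Finset.sum_congr rfl fun i _ => ?_
          rw [hsym x]; ring
      _ = lam * ∑ j ∈ (Coalgebra.Repr.arbitrary k z).index,
            ∑ i ∈ (Coalgebra.Repr.arbitrary k y).index,
            η ((Coalgebra.Repr.arbitrary k y).left i ⊗ₜ (Coalgebra.Repr.arbitrary k z).left j) *
              η (((Coalgebra.Repr.arbitrary k y).right i * (Coalgebra.Repr.arbitrary k z).right j) ⊗ₜ x) := by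
          rw [h2']
      _ = _ := by
          rw [Finset.mul_sum]
          refine Finset.sum_congr rfl fun j _ => ?_
          rw [Finset.mul_sum]
          refine Finset.sum_congr rfl fun i _ => ?_
          rw [hsym x]; ring

end PaperA2
end
end
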